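/- arXiv:2003.09470 — 13 statements merged into one kernel-verified Lean document; each statement's English description precedes it below -/
import Mathlib

section
/- For integers a, b, k with a, b ≥ 1 and 2 ≤ k ≤ a, the k-rainbow total domination number of K⁺_{a,b} equals 2a. -/
open SimpleGraph Finset

/-- `f` is a `k`-rainbow dominating function of `G`: every vertex with empty label
sees all colors of `Fin k` among its neighbors' labels. -/
def IsKRDF {V : Type*} (G : SimpleGraph V) (k : ℕ) (f : V → Finset (Fin k)) : Prop :=
  ∀ v, f v = ∅ → ∀ i : Fin k, ∃ u, G.Adj v u ∧ i ∈ f u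

/-- `f` is a `k`-rainbow total dominating function of `G`: a `k`RDF such that every
vertex labeled by a singleton `{i}` has a neighbor whose label contains `i`. -/
def IsKRTDF {V : Type*} (G : SimpleGraph V) (k : ℕ) (f : V → Finset (Fin k)) : Prop :=
  IsKRDF G k f ∧ ∀ v (i : Fin k), f v = {i} → ∃ u, G.Adj v u ∧ i ∈ f u

/-- The `k`-rainbow domination number of `G`. -/
noncomputable def rdnum {V : Type*} [Fintype V] (G : SimpleGraph V) (k : ℕ) : ℕ :=
  sInf {n | ∃ f : V → Finset (Fin k), IsKRDF G k f ∧ ∑ v, (f v).card = n}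

/-- The `k`-rainbow total domination number of `G`. -/
noncomputable def rtdnum {V : Type*} [Fintype V] (G : SimpleGraph V) (k : ℕ) : ℕ :=
  sInf {n | ∃ f : V → Finset (Fin k), IsKRTDF G k f ∧ ∑ v, (f v).card = n}

/-- The domination number of `G`. -/
noncomputable def domnum {V : Type*} [Fintype V] (G : SimpleGraph V) : ℕ :=
  sInf {n | ∃ D : Finset V, (∀ v ∉ D, ∃ u ∈ D, G.Adj u v) ∧ D.card = n}

/-- The total domination number of `G`. -/
noncomputable def totdomnum {V : Type*} [Fintype V] (G : SimpleGraph V) : ℕ :=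
  sInf {n | ∃ D : Finset V, (∀ v, ∃ u ∈ D, G.Adj u v) ∧ D.card = n}

/-- The graph `K⁺_{a,b}`: the complete bipartite graph on parts
`x_1,…,x_a` and `B` (`|B| = b`), together with pendant vertices `y_1,…,y_a`,
where `y_i` is attached to `x_i`. -/
def Kplus (a b : ℕ) : SimpleGraph ((Fin a ⊕ Fin b) ⊕ Fin a) :=
  SimpleGraph.fromRel (fun u v =>
    match u, v with
    | Sum.inl (Sum.inl _), Sum.inl (Sum.inr _) => True
    | Sum.inl (Sum.inl i), Sum.inr j => i = j
    | _, _ => False)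

lemma adj_pendant {a b : ℕ} (i : Fin a) (u : (Fin a ⊕ Fin b) ⊕ Fin a) :
    (Kplus a b).Adj (Sum.inr i) u ↔ u = Sum.inl (Sum.inl i) := by
  rcases u with ((x|x)|x) <;> simp [Kplus, SimpleGraph.fromRel_adj, eq_comm]

lemma adj_xy {a b : ℕ} (i : Fin a) : (Kplus a b).Adj (Sum.inl (Sum.inl i)) (Sum.inr i) := by
  simp [Kplus, SimpleGraph.fromRel_adj]

lemma adj_xB {a b : ℕ} (i : Fin a) (j : Fin b) :
    (Kplus a b).Adj (Sum.inl (Sum.inl i)) (Sum.inl (Sum.inr j)) := by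
  simp [Kplus, SimpleGraph.fromRel_adj]

theorem rtdnum_Kplus (a b k : ℕ) (ha : 1 ≤ a) (hb : 1 ≤ b) (hk2 : 2 ≤ k) (hka : k ≤ a) :
    rtdnum (Kplus a b) k = 2 * a := by
  have hk0 : 0 < k := by omega
  -- the witness function
  set c : Fin a → Fin k := fun i => ⟨min i.val (k-1), by omega⟩ with hc
  set f : (Fin a ⊕ Fin b) ⊕ Fin a → Finset (Fin k) := fun v =>
    match v with
    | Sum.inl (Sum.inl i) => {c i}
    | Sum.inl (Sum.inr _) => ∅
    | Sum.inr i => {c i} with hf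
  have hmem : (2 * a) ∈ {n | ∃ g : ((Fin a ⊕ Fin b) ⊕ Fin a) → Finset (Fin k),
      IsKRTDF (Kplus a b) k g ∧ ∑ v, (g v).card = n} := by
    refine ⟨f, ⟨?_, ?_⟩, ?_⟩
    · intro v hv i
      rcases v with ((x|x)|x)
      · simp [hf] at hv
      · refine ⟨Sum.inl (Sum.inl ⟨i.val, lt_of_lt_of_le i.isLt hka⟩), (adj_xB _ _).symm, ?_⟩
        simp only [hf, hc, Finset.mem_singleton]
        ext
        simp
        omega
      · simp [hf] at hv
    · intro v i hv
      rcases v with ((x|x)|x)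
      · refine ⟨Sum.inr x, adj_xy x, ?_⟩
        simp only [hf, Finset.singleton_inj] at hv
        simp [hf, hv]
      · exact absurd hv.symm (Finset.singleton_ne_empty i)
      · refine ⟨Sum.inl (Sum.inl x), ((adj_pendant x _).mpr rfl), ?_⟩
        simp only [hf, Finset.singleton_inj] at hv
        simp [hf, hv]
    · simp [hf, Fintype.sum_sum_type]
      ring
  refine le_antisymm (Nat.sInf_le hmem) (le_csInf ⟨_, hmem⟩ ?_)
  rintro n ⟨g, ⟨hg1, hg2⟩, rfl⟩
  have key : ∀ i : Fin a, 2 ≤ (g (Sum.inl (Sum.inl i))).card + (g (Sum.inr i)).card := by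
    intro i
    rcases Nat.lt_or_ge (g (Sum.inr i)).card 2 with hlt | hge
    · interval_cases h : (g (Sum.inr i)).card
      · -- empty
        have he : g (Sum.inr i) = ∅ := Finset.card_eq_zero.mp h
        have hx : g (Sum.inl (Sum.inl i)) = Finset.univ := by
          rw [Finset.eq_univ_iff_forall]
          intro j
          obtain ⟨u, hu, hj⟩ := hg1 _ he j
          rw [adj_pendant] at hu
          rwa [hu] at hj
        have : (g (Sum.inl (Sum.inl i))).card = k := by rw [hx]; simp
        omega
      · obtain ⟨j, hj⟩ := Finset.card_eq_one.mp h
        obtain ⟨u, hu, hj'⟩ := hg2 _ j hj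
        rw [adj_pendant] at hu
        have : 1 ≤ (g (Sum.inl (Sum.inl i))).card := by
          rw [← hu]; exact Finset.card_pos.mpr ⟨j, hj'⟩
        omega
    · omega
  have : ∑ i : Fin a, 2 ≤ ∑ i : Fin a, ((g (Sum.inl (Sum.inl i))).card + (g (Sum.inr i)).card) :=
    Finset.sum_le_sum fun i _ => key i
  simp only [Fintype.sum_sum_type]
  rw [Finset.sum_add_distrib] at this
  simp at this ⊢
  omega
end

section
/- Let a ≤ b be positive integers and k ≥ 1 with a + b > k and a ≥ 2k. Then the k-rainbow domination number of K_{a,b} equals 2k. -/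
open SimpleGraph Finset

lemma cover_le_sum {α : Type*} [Fintype α] {k : ℕ} (g : α → Finset (Fin k))
    (h : ∀ c : Fin k, ∃ u, c ∈ g u) : k ≤ ∑ u, (g u).card := by
  have hsub : (Finset.univ : Finset (Fin k)) ⊆ Finset.univ.biUnion g := by
    intro c _
    obtain ⟨u, hu⟩ := h c
    exact Finset.mem_biUnion.2 ⟨u, Finset.mem_univ u, hu⟩
  calc k = (Finset.univ : Finset (Fin k)).card := (Finset.card_fin k).symm
    _ ≤ (Finset.univ.biUnion g).card := Finset.card_le_card hsub
    _ ≤ ∑ u, (g u).card := Finset.card_biUnion_le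

lemma allNonempty_le_sum {α : Type*} [Fintype α] {k : ℕ} (g : α → Finset (Fin k))
    (h : ∀ u, g u ≠ ∅) : Fintype.card α ≤ ∑ u, (g u).card := by
  calc Fintype.card α = ∑ _u : α, 1 := by simp
    _ ≤ ∑ u, (g u).card := Finset.sum_le_sum fun u _ =>
        Finset.card_pos.2 (Finset.nonempty_iff_ne_empty.2 (h u))

theorem rdnum_completeBipartite_large (a b k : ℕ) (ha : 1 ≤ a) (hab : a ≤ b) (hk : 1 ≤ k)
    (h : k < a + b) (h2k : 2 * k ≤ a) :
    rdnum (completeBipartiteGraph (Fin a) (Fin b)) k = 2 * k := by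
  have hb : 1 ≤ b := ha.trans hab
  set G := completeBipartiteGraph (Fin a) (Fin b)
  have hmem : 2 * k ∈ {n | ∃ f : (Fin a ⊕ Fin b) → Finset (Fin k),
      IsKRDF G k f ∧ ∑ v, (f v).card = n} := by
    refine ⟨Sum.elim (fun i => if i = (⟨0, ha⟩ : Fin a) then Finset.univ else ∅)
      (fun j => if j = (⟨0, hb⟩ : Fin b) then Finset.univ else ∅), ?_, ?_⟩
    · intro v hv c
      cases v with
      | inl i =>
        refine ⟨Sum.inr ⟨0, hb⟩, by simp [G, completeBipartiteGraph], by simp⟩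
      | inr j =>
        refine ⟨Sum.inl ⟨0, ha⟩, by simp [G, completeBipartiteGraph], by simp⟩
    · rw [Fintype.sum_sum_type]
      simp only [Sum.elim_inl, Sum.elim_inr, apply_ite Finset.card, Finset.card_univ,
        Fintype.card_fin, Finset.card_empty]
      rw [Finset.sum_ite_eq' Finset.univ (⟨0, ha⟩ : Fin a) (fun _ => k),
        Finset.sum_ite_eq' Finset.univ (⟨0, hb⟩ : Fin b) (fun _ => k)]
      simp [two_mul]
  have hlow : ∀ n ∈ {n | ∃ f : (Fin a ⊕ Fin b) → Finset (Fin k),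
      IsKRDF G k f ∧ ∑ v, (f v).card = n}, 2 * k ≤ n := by
    rintro n ⟨f, hf, rfl⟩
    rw [Fintype.sum_sum_type]
    set SL := ∑ i : Fin a, (f (Sum.inl i)).card with hSL
    set SR := ∑ j : Fin b, (f (Sum.inr j)).card with hSR
    by_cases hL : ∀ i : Fin a, f (Sum.inl i) ≠ ∅
    · have := allNonempty_le_sum (fun i : Fin a => f (Sum.inl i)) hL
      simp only [Fintype.card_fin] at this
      omega
    · push_neg at hL
      obtain ⟨i0, hi0⟩ := hL
      have hkR : k ≤ SR := by
        apply cover_le_sum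
        intro c
        obtain ⟨u, hadj, hc⟩ := hf (Sum.inl i0) hi0 c
        cases u with
        | inl i' => simp [G, completeBipartiteGraph] at hadj
        | inr j => exact ⟨j, hc⟩
      by_cases hR : ∀ j : Fin b, f (Sum.inr j) ≠ ∅
      · have := allNonempty_le_sum (fun j : Fin b => f (Sum.inr j)) hR
        simp only [Fintype.card_fin] at this
        omega
      · push_neg at hR
        obtain ⟨j0, hj0⟩ := hR
        have hkL : k ≤ SL := by
          apply cover_le_sum
          intro c
          obtain ⟨u, hadj, hc⟩ := hf (Sum.inr j0) hj0 c
          cases u with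
          | inl i => exact ⟨i, hc⟩
          | inr j' => simp [G, completeBipartiteGraph] at hadj
        omega
  exact le_antisymm (Nat.sInf_le hmem) (le_csInf ⟨2 * k, hmem⟩ hlow)
end

section
/- Let a ≤ b be positive integers and k ≥ 1 with a + b > k and a < 2k. Then the k-rainbow domination number of K_{a,b} equals max{a, k}. -/
open SimpleGraph Finset

lemma sumB_ge {a b k : ℕ} (f : (Fin a ⊕ Fin b) → Finset (Fin k))
    (hf : IsKRDF (completeBipartiteGraph (Fin a) (Fin b)) k f)
    (j : Fin a) (hj : f (Sum.inl j) = ∅) :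
    k ≤ ∑ y : Fin b, (f (Sum.inr y)).card := by
  have hsub : (Finset.univ : Finset (Fin k)) ⊆
      Finset.univ.biUnion (fun y : Fin b => f (Sum.inr y)) := by
    intro i _
    obtain ⟨u, hadj, hi⟩ := hf _ hj i
    cases u with
    | inl x => simp at hadj
    | inr y => exact Finset.mem_biUnion.2 ⟨y, Finset.mem_univ _, hi⟩
  calc k = (Finset.univ : Finset (Fin k)).card := by simp
    _ ≤ _ := Finset.card_le_card hsub
    _ ≤ ∑ y : Fin b, (f (Sum.inr y)).card := Finset.card_biUnion_le

lemma sumA_ge {a b k : ℕ} (f : (Fin a ⊕ Fin b) → Finset (Fin k))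
    (hf : IsKRDF (completeBipartiteGraph (Fin a) (Fin b)) k f)
    (j : Fin b) (hj : f (Sum.inr j) = ∅) :
    k ≤ ∑ x : Fin a, (f (Sum.inl x)).card := by
  have hsub : (Finset.univ : Finset (Fin k)) ⊆
      Finset.univ.biUnion (fun x : Fin a => f (Sum.inl x)) := by
    intro i _
    obtain ⟨u, hadj, hi⟩ := hf _ hj i
    cases u with
    | inr x => simp at hadj
    | inl x => exact Finset.mem_biUnion.2 ⟨x, Finset.mem_univ _, hi⟩
  calc k = (Finset.univ : Finset (Fin k)).card := by simp
    _ ≤ _ := Finset.card_le_card hsub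
    _ ≤ ∑ x : Fin a, (f (Sum.inl x)).card := Finset.card_biUnion_le

theorem rdnum_completeBipartite_mid (a b k : ℕ) (ha : 1 ≤ a) (hab : a ≤ b) (hk : 1 ≤ k)
    (h : k < a + b) (h2k : a < 2 * k) :
    rdnum (completeBipartiteGraph (Fin a) (Fin b)) k = max a k := by
  classical
  set S : Set ℕ := {n | ∃ f : (Fin a ⊕ Fin b) → Finset (Fin k),
      IsKRDF (completeBipartiteGraph (Fin a) (Fin b)) k f ∧ ∑ v, (f v).card = n} with hS
  -- lower bound: every element of S is ≥ max a k
  have hlb : ∀ n ∈ S, max a k ≤ n := by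
    rintro n ⟨f, hf, rfl⟩
    rw [Fintype.sum_sum_type]
    set SA := ∑ x : Fin a, (f (Sum.inl x)).card with hSA
    set SB := ∑ y : Fin b, (f (Sum.inr y)).card with hSB
    have hkle : k ≤ SA + SB := by
      by_cases hA : ∃ j : Fin a, f (Sum.inl j) = ∅
      · obtain ⟨j, hj⟩ := hA
        exact le_trans (sumB_ge f hf j hj) (Nat.le_add_left _ _)
      · push_neg at hA
        have h1 : a ≤ SA :=
          calc a = ∑ _x : Fin a, 1 := by simp
            _ ≤ SA := Finset.sum_le_sum fun x _ =>
                Finset.one_le_card.2 (hA x)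
        by_cases hB : ∃ j : Fin b, f (Sum.inr j) = ∅
        · obtain ⟨j, hj⟩ := hB
          exact le_trans (sumA_ge f hf j hj) (Nat.le_add_right _ _)
        · push_neg at hB
          have h2 : b ≤ SB :=
            calc b = ∑ _y : Fin b, 1 := by simp
              _ ≤ SB := Finset.sum_le_sum fun y _ =>
                  Finset.one_le_card.2 (hB y)
          omega
    have hale : a ≤ SA + SB := by
      by_cases hA : ∃ j : Fin a, f (Sum.inl j) = ∅
      · obtain ⟨j, hj⟩ := hA
        have hB1 : k ≤ SB := sumB_ge f hf j hj
        by_cases hB : ∃ j : Fin b, f (Sum.inr j) = ∅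
        · obtain ⟨j', hj'⟩ := hB
          have hA1 : k ≤ SA := sumA_ge f hf j' hj'
          omega
        · push_neg at hB
          have h2 : b ≤ SB :=
            calc b = ∑ _y : Fin b, 1 := by simp
              _ ≤ SB := Finset.sum_le_sum fun y _ =>
                  Finset.one_le_card.2 (hB y)
          omega
      · push_neg at hA
        have h1 : a ≤ SA :=
          calc a = ∑ _x : Fin a, 1 := by simp
            _ ≤ SA := Finset.sum_le_sum fun x _ =>
                Finset.one_le_card.2 (hA x)
        omega
    exact max_le hale hkle
  -- upper bound: exhibit a kRDF of weight max a k
  have hub : max a k ∈ S := by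
    by_cases hka : k ≤ a
    · -- weight a, singletons on the left side
      refine ⟨Sum.elim (fun j : Fin a => if hj : (j : ℕ) < k then {(⟨(j : ℕ), hj⟩ : Fin k)}
          else {(⟨0, hk⟩ : Fin k)}) (fun _ => ∅), ?_, ?_⟩
      · intro v hv i
        cases v with
        | inl j =>
          exfalso
          simp only [Sum.elim_inl] at hv
          split at hv <;> simp at hv
        | inr y =>
          refine ⟨Sum.inl ⟨(i : ℕ), lt_of_lt_of_le i.isLt hka⟩, by simp, ?_⟩
          simp only [Sum.elim_inl]
          rw [dif_pos i.isLt]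
          simp [Fin.ext_iff]
      · rw [Fintype.sum_sum_type]
        have : ∀ j : Fin a, ((Sum.elim (fun j : Fin a => if hj : (j : ℕ) < k then
            {(⟨(j : ℕ), hj⟩ : Fin k)} else {(⟨0, hk⟩ : Fin k)}) (fun _ => ∅) : (Fin a ⊕ Fin b) → Finset (Fin k)) (Sum.inl j)).card = 1 := by
          intro j
          simp only [Sum.elim_inl]
          split <;> simp
        simp only [this, Sum.elim_inr, Finset.card_empty, Finset.sum_const_zero, add_zero]
        simp [max_eq_left hka]
    · -- a < k : weight k, colors partitioned over the left side
      push_neg at hka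
      have ha0 : 0 < a := ha
      refine ⟨Sum.elim (fun j : Fin a =>
          Finset.univ.filter (fun i : Fin k => (⟨(i : ℕ) % a, Nat.mod_lt _ ha0⟩ : Fin a) = j))
          (fun _ => ∅), ?_, ?_⟩
      · intro v hv i
        cases v with
        | inl j =>
          exfalso
          have hmem : (⟨(j : ℕ), lt_trans j.isLt hka⟩ : Fin k) ∈
              Finset.univ.filter (fun i : Fin k => (⟨(i : ℕ) % a, Nat.mod_lt _ ha0⟩ : Fin a) = j) := by
            simp [Fin.ext_iff, Nat.mod_eq_of_lt j.isLt]
          rw [Sum.elim_inl] at hv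
          rw [hv] at hmem
          exact absurd hmem (Finset.notMem_empty _)
        | inr y =>
          refine ⟨Sum.inl ⟨(i : ℕ) % a, Nat.mod_lt _ ha0⟩, by simp, ?_⟩
          simp
      · rw [Fintype.sum_sum_type]
        simp only [Sum.elim_inl, Sum.elim_inr, Finset.card_empty, Finset.sum_const_zero, add_zero]
        have hcount : (Finset.univ : Finset (Fin k)).card = ∑ j : Fin a,
            (Finset.univ.filter (fun i : Fin k => (⟨(i : ℕ) % a, Nat.mod_lt _ ha0⟩ : Fin a) = j)).card :=
          Finset.card_eq_sum_card_fiberwise (fun x _ => Finset.mem_univ _)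
        rw [← hcount]
        simp [max_eq_right (le_of_lt hka)]
  rw [rdnum, ← hS]
  exact le_antisymm (Nat.sInf_le hub) (le_csInf ⟨_, hub⟩ hlb)
end

section
/- Let a ≤ b be positive integers and k ≥ 2 with a + b > k and a ≤ ⌊k/2⌋. Then the k-rainbow total domination number of K_{a,b} equals k. -/
open SimpleGraph Finset

lemma krdf_lower {V : Type*} [Fintype V] (G : SimpleGraph V) (k : ℕ)
    (hcard : k < Fintype.card V) (f : V → Finset (Fin k)) (hf : IsKRDF G k f) :
    k ≤ ∑ v, (f v).card := by
  by_cases he : ∃ v, f v = ∅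
  · obtain ⟨v, hv⟩ := he
    have hall : ∀ i : Fin k, ∃ u, i ∈ f u := by
      intro i
      obtain ⟨u, _, hu⟩ := hf v hv i
      exact ⟨u, hu⟩
    have hsub : (univ : Finset (Fin k)) ⊆ univ.biUnion f := by
      intro i _
      obtain ⟨u, hu⟩ := hall i
      exact Finset.mem_biUnion.2 ⟨u, Finset.mem_univ u, hu⟩
    calc k = (univ : Finset (Fin k)).card := by simp
      _ ≤ (univ.biUnion f).card := Finset.card_le_card hsub
      _ ≤ ∑ v, (f v).card := Finset.card_biUnion_le
  · push_neg at he
    have : ∀ v : V, 1 ≤ (f v).card := by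
      intro v
      exact Finset.card_pos.2 (he v)
    calc k ≤ Fintype.card V := le_of_lt hcard
      _ = ∑ v : V, 1 := by simp
      _ ≤ ∑ v, (f v).card := Finset.sum_le_sum fun v _ => this v

theorem rtdnum_completeBipartite_small (a b k : ℕ) (ha : 1 ≤ a) (hab : a ≤ b) (hk : 2 ≤ k)
    (h : k < a + b) (hak : a ≤ k / 2) :
    rtdnum (completeBipartiteGraph (Fin a) (Fin b)) k = k := by
  have h2a : 2 * a ≤ k := by omega
  set G := completeBipartiteGraph (Fin a) (Fin b)
  have hcard : k < Fintype.card (Fin a ⊕ Fin b) := by simp; omega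
  -- the coloring function
  have hga : ∀ c : Fin k, min (c.val / 2) (a - 1) < a := by
    intro c; omega
  let g : Fin k → Fin a := fun c => ⟨min (c.val / 2) (a - 1), hga c⟩
  let f : Fin a ⊕ Fin b → Finset (Fin k) := fun v =>
    match v with
    | Sum.inl i => univ.filter (fun c => g c = i)
    | Sum.inr _ => ∅
  have hmem : ∀ (i : Fin a) (c : Fin k), c ∈ f (Sum.inl i) ↔ g c = i := by
    intro i c; simp [f]
  have hc1lt : ∀ i : Fin a, 2 * i.val < k := fun i => by have := i.isLt; omega
  have hc2lt : ∀ i : Fin a, 2 * i.val + 1 < k := fun i => by have := i.isLt; omega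
  have hg1 : ∀ i : Fin a, g ⟨2 * i.val, hc1lt i⟩ = i := by
    intro i
    have := i.isLt
    apply Fin.ext
    show min (2 * i.val / 2) (a - 1) = i.val
    omega
  have hg2 : ∀ i : Fin a, g ⟨2 * i.val + 1, hc2lt i⟩ = i := by
    intro i
    have := i.isLt
    apply Fin.ext
    show min ((2 * i.val + 1) / 2) (a - 1) = i.val
    omega
  have htwo : ∀ i : Fin a, ({⟨2 * i.val, hc1lt i⟩, ⟨2 * i.val + 1, hc2lt i⟩} : Finset (Fin k)) ⊆ f (Sum.inl i) := by
    intro i c hc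
    rcases Finset.mem_insert.1 hc with hc | hc
    · rw [hc, hmem]; exact hg1 i
    · rw [Finset.mem_singleton.1 hc, hmem]; exact hg2 i
  have hcard2 : ∀ i : Fin a, 2 ≤ (f (Sum.inl i)).card := by
    intro i
    have hne : (⟨2 * i.val, hc1lt i⟩ : Fin k) ≠ ⟨2 * i.val + 1, hc2lt i⟩ := by
      simp [Fin.ext_iff]
    calc 2 = ({⟨2 * i.val, hc1lt i⟩, ⟨2 * i.val + 1, hc2lt i⟩} : Finset (Fin k)).card := by
            rw [Finset.card_insert_of_notMem (by simpa using hne), Finset.card_singleton]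
      _ ≤ (f (Sum.inl i)).card := Finset.card_le_card (htwo i)
  have hKRTDF : IsKRTDF G k f := by
    constructor
    · intro v hv i
      match v with
      | Sum.inl j =>
        exfalso
        have := hcard2 j
        rw [hv] at this
        simp at this
      | Sum.inr j =>
        refine ⟨Sum.inl (g i), ?_, ?_⟩
        · simp [G]
        · rw [hmem]
    · intro v i hv
      match v with
      | Sum.inl j =>
        exfalso
        have := hcard2 j
        rw [hv] at this
        simp at this
      | Sum.inr j =>
        exact absurd hv.symm (Finset.singleton_ne_empty i)
  have hsum : ∑ v, (f v).card = k := by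
    rw [Fintype.sum_sum_type]
    have hz : ∑ j : Fin b, (f (Sum.inr j)).card = 0 := by
      apply Finset.sum_eq_zero; intro j _; rfl
    rw [hz, add_zero]
    have := Finset.card_eq_sum_card_fiberwise (s := (univ : Finset (Fin k)))
      (t := (univ : Finset (Fin a))) (f := g) (fun c _ => Finset.mem_univ (g c))
    simp only [Finset.card_univ, Fintype.card_fin] at this
    rw [← this]
  have hmemS : k ∈ {n | ∃ f : Fin a ⊕ Fin b → Finset (Fin k),
      IsKRTDF G k f ∧ ∑ v, (f v).card = n} := ⟨f, hKRTDF, hsum⟩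
  have hlb : ∀ n ∈ {n | ∃ f : Fin a ⊕ Fin b → Finset (Fin k),
      IsKRTDF G k f ∧ ∑ v, (f v).card = n}, k ≤ n := by
    rintro n ⟨f', hf', hsum'⟩
    rw [← hsum']
    exact krdf_lower G k hcard f' hf'.1
  exact le_antisymm (Nat.sInf_le hmemS) (le_csInf ⟨k, hmemS⟩ hlb)
end

section
/- Let a ≤ b be positive integers and k ≥ 2 with a ≥ ⌈(3k−2)/2⌉. Then the k-rainbow total domination number of K_{a,b} equals 2k. -/
open SimpleGraph Finset

section helpers

lemma krtd_adj_left {a b : ℕ} (x : Fin a) (y : Fin b) :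
    (completeBipartiteGraph (Fin a) (Fin b)).Adj (Sum.inl x) (Sum.inr y) := by
  simp [completeBipartiteGraph]

lemma krtd_nbr_left {a b : ℕ} {x : Fin a} {u : Fin a ⊕ Fin b}
    (h : (completeBipartiteGraph (Fin a) (Fin b)).Adj (Sum.inl x) u) :
    ∃ y, u = Sum.inr y := by
  rcases u with x' | y
  · simp [completeBipartiteGraph] at h
  · exact ⟨y, rfl⟩

lemma krtd_nbr_right {a b : ℕ} {y : Fin b} {u : Fin a ⊕ Fin b}
    (h : (completeBipartiteGraph (Fin a) (Fin b)).Adj (Sum.inr y) u) :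
    ∃ x, u = Sum.inl x := by
  rcases u with x | y'
  · exact ⟨x, rfl⟩
  · simp [completeBipartiteGraph] at h

lemma krtd_cover_le_sum {β : Type*} [Fintype β] {k : ℕ} (h : β → Finset (Fin k))
    (hc : ∀ i : Fin k, ∃ y, i ∈ h y) : k ≤ ∑ y, (h y).card := by
  have h1 : (univ : Finset (Fin k)) ⊆ univ.biUnion h := by
    intro i _
    rcases hc i with ⟨y, hy⟩
    exact mem_biUnion.2 ⟨y, mem_univ y, hy⟩
  calc k = (univ : Finset (Fin k)).card := (Finset.card_fin k).symm
    _ ≤ (univ.biUnion h).card := card_le_card h1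
    _ ≤ ∑ y, (h y).card := card_biUnion_le

lemma krtd_key {α β : Type*} [Fintype α] [Fintype β] {k : ℕ}
    (g : α → Finset (Fin k)) (h : β → Finset (Fin k))
    (hk : 2 ≤ k) (ha : (3 * k - 1) / 2 ≤ Fintype.card α)
    (hg : ∀ x, g x ≠ ∅)
    (hcover : ∀ i : Fin k, ∃ x, i ∈ g x)
    (hsingle : ∀ x (i : Fin k), g x = {i} → ∃ y, i ∈ h y) :
    2 * k ≤ ∑ x, (g x).card + ∑ y, (h y).card := by
  classical
  set A1 : Finset α := univ.filter (fun x => (g x).card = 1) with hA1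
  set A2 : Finset α := univ.filter (fun x => ¬ (g x).card = 1) with hA2
  have hsum : ∑ x ∈ A1, (g x).card + ∑ x ∈ A2, (g x).card = ∑ x, (g x).card :=
    Finset.sum_filter_add_sum_filter_not univ _ _
  have hcards : A1.card + A2.card = Fintype.card α := by
    rw [← Finset.card_univ]
    exact Finset.card_filter_add_card_filter_not _
  have hA1sum : ∑ x ∈ A1, (g x).card = A1.card := by
    rw [Finset.card_eq_sum_ones]
    exact Finset.sum_congr rfl (fun x hx => (Finset.mem_filter.1 hx).2)
  have hA2sum : 2 * A2.card ≤ ∑ x ∈ A2, (g x).card := by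
    have : 2 * A2.card = ∑ _x ∈ A2, 2 := by rw [Finset.sum_const, smul_eq_mul, mul_comm]
    rw [this]
    refine Finset.sum_le_sum (fun x hx => ?_)
    have h1 : (g x).card ≠ 1 := (Finset.mem_filter.1 hx).2
    have h0 : (g x).card ≠ 0 := fun hc => hg x (Finset.card_eq_zero.1 hc)
    omega
  set S : Finset (Fin k) := A1.biUnion g with hS
  set T : Finset (Fin k) := A2.biUnion g with hT
  have hScard : S.card ≤ A1.card := by
    calc S.card ≤ ∑ x ∈ A1, (g x).card := card_biUnion_le
      _ = A1.card := hA1sum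
  have hTcard : T.card ≤ ∑ x ∈ A2, (g x).card := card_biUnion_le
  have hcov : k ≤ S.card + T.card := by
    have hsub : (univ : Finset (Fin k)) ⊆ S ∪ T := by
      intro i _
      rcases hcover i with ⟨x, hx⟩
      by_cases h1 : (g x).card = 1
      · exact Finset.mem_union_left _ (mem_biUnion.2 ⟨x, Finset.mem_filter.2 ⟨mem_univ x, h1⟩, hx⟩)
      · exact Finset.mem_union_right _ (mem_biUnion.2 ⟨x, Finset.mem_filter.2 ⟨mem_univ x, h1⟩, hx⟩)
    calc k = (univ : Finset (Fin k)).card := (Finset.card_fin k).symm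
      _ ≤ (S ∪ T).card := card_le_card hsub
      _ ≤ S.card + T.card := card_union_le _ _
  have hSB : S.card ≤ ∑ y, (h y).card := by
    have hsub : S ⊆ univ.biUnion h := by
      intro i hi
      rcases mem_biUnion.1 hi with ⟨x, hx, hix⟩
      have h1 : (g x).card = 1 := (Finset.mem_filter.1 hx).2
      rcases Finset.card_eq_one.1 h1 with ⟨j, hj⟩
      have : i = j := by rw [hj] at hix; exact Finset.mem_singleton.1 hix
      rcases hsingle x i (by rw [hj, this]) with ⟨y, hy⟩
      exact mem_biUnion.2 ⟨y, mem_univ y, hy⟩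
    calc S.card ≤ (univ.biUnion h).card := card_le_card hsub
      _ ≤ ∑ y, (h y).card := card_biUnion_le
  rcases Nat.eq_zero_or_pos A1.card with h0 | h1
  · omega
  · have hS1 : 1 ≤ S.card := by
      rcases Finset.card_pos.1 h1 with ⟨x, hx⟩
      have hc1 : (g x).card = 1 := (Finset.mem_filter.1 hx).2
      rcases Finset.card_pos.1 (by omega : 0 < (g x).card) with ⟨i, hi⟩
      exact Finset.card_pos.2 ⟨i, mem_biUnion.2 ⟨x, hx, hi⟩⟩
    omega

lemma krtd_all_nonempty_le {α : Type*} [Fintype α] {k : ℕ} (g : α → Finset (Fin k))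
    (hg : ∀ x, g x ≠ ∅) : Fintype.card α ≤ ∑ x, (g x).card := by
  rw [← Finset.card_univ, Finset.card_eq_sum_ones]
  refine Finset.sum_le_sum (fun x _ => ?_)
  exact Finset.card_pos.2 (Finset.nonempty_iff_ne_empty.2 (hg x))

end helpers


lemma krtd_lower (a b k : ℕ) (hk : 2 ≤ k) (hab : a ≤ b) (h2 : (3 * k - 1) / 2 ≤ a)
    (f : Fin a ⊕ Fin b → Finset (Fin k))
    (hf : IsKRTDF (completeBipartiteGraph (Fin a) (Fin b)) k f) :
    2 * k ≤ ∑ v, (f v).card := by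
  rw [Fintype.sum_sum_type]
  have h2b : (3 * k - 1) / 2 ≤ b := le_trans h2 hab
  have hsingL : ∀ (x : Fin a) (i : Fin k), f (Sum.inl x) = {i} → ∃ y, i ∈ f (Sum.inr y) := by
    intro x i hx
    rcases hf.2 (Sum.inl x) i hx with ⟨u, hadj, hi⟩
    rcases krtd_nbr_left hadj with ⟨y, rfl⟩
    exact ⟨y, hi⟩
  have hsingR : ∀ (y : Fin b) (i : Fin k), f (Sum.inr y) = {i} → ∃ x, i ∈ f (Sum.inl x) := by
    intro y i hy
    rcases hf.2 (Sum.inr y) i hy with ⟨u, hadj, hi⟩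
    rcases krtd_nbr_right hadj with ⟨x, rfl⟩
    exact ⟨x, hi⟩
  by_cases hA : ∃ x, f (Sum.inl x) = ∅
  · -- some left vertex empty: right side covers all colors
    rcases hA with ⟨x0, hx0⟩
    have hcovR : ∀ i : Fin k, ∃ y, i ∈ f (Sum.inr y) := by
      intro i
      rcases hf.1 (Sum.inl x0) hx0 i with ⟨u, hadj, hi⟩
      rcases krtd_nbr_left hadj with ⟨y, rfl⟩
      exact ⟨y, hi⟩
    by_cases hB : ∃ y, f (Sum.inr y) = ∅
    · rcases hB with ⟨y0, hy0⟩
      have hcovL : ∀ i : Fin k, ∃ x, i ∈ f (Sum.inl x) := by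
        intro i
        rcases hf.1 (Sum.inr y0) hy0 i with ⟨u, hadj, hi⟩
        rcases krtd_nbr_right hadj with ⟨x, rfl⟩
        exact ⟨x, hi⟩
      have hcL : k ≤ ∑ x : Fin a, (f (Sum.inl x)).card := krtd_cover_le_sum _ hcovL
      have hcR : k ≤ ∑ y : Fin b, (f (Sum.inr y)).card := krtd_cover_le_sum _ hcovR
      omega
    · push_neg at hB
      have hkey : 2 * k ≤ ∑ y : Fin b, (f (Sum.inr y)).card + ∑ x : Fin a, (f (Sum.inl x)).card :=
        krtd_key _ _ hk (by simpa using h2b) (fun y => (hB y).ne_empty) hcovR hsingR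
      omega
  · push_neg at hA
    by_cases hB : ∃ y, f (Sum.inr y) = ∅
    · rcases hB with ⟨y0, hy0⟩
      have hcovL : ∀ i : Fin k, ∃ x, i ∈ f (Sum.inl x) := by
        intro i
        rcases hf.1 (Sum.inr y0) hy0 i with ⟨u, hadj, hi⟩
        rcases krtd_nbr_right hadj with ⟨x, rfl⟩
        exact ⟨x, hi⟩
      have hkey : 2 * k ≤ ∑ x : Fin a, (f (Sum.inl x)).card + ∑ y : Fin b, (f (Sum.inr y)).card :=
        krtd_key _ _ hk (by simpa using h2) (fun x => (hA x).ne_empty) hcovL hsingL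
      omega
    · push_neg at hB
      have hL : a ≤ ∑ x : Fin a, (f (Sum.inl x)).card := by
        simpa using krtd_all_nonempty_le (fun x => f (Sum.inl x)) (fun x => (hA x).ne_empty)
      have hR : b ≤ ∑ y : Fin b, (f (Sum.inr y)).card := by
        simpa using krtd_all_nonempty_le (fun y => f (Sum.inr y)) (fun y => (hB y).ne_empty)
      omega

theorem rtdnum_completeBipartite_large (a b k : ℕ) (ha : 1 ≤ a) (hab : a ≤ b) (hk : 2 ≤ k)
    (h2 : (3 * k - 1) / 2 ≤ a) :
    rtdnum (completeBipartiteGraph (Fin a) (Fin b)) k = 2 * k := by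
  classical
  have hb : 1 ≤ b := le_trans ha hab
  set x0 : Fin a := ⟨0, ha⟩
  set y0 : Fin b := ⟨0, hb⟩
  set f0 : Fin a ⊕ Fin b → Finset (Fin k) := fun v =>
    match v with
    | Sum.inl x => if x = x0 then (univ : Finset (Fin k)) else ∅
    | Sum.inr y => if y = y0 then (univ : Finset (Fin k)) else ∅ with hf0
  have huniv_ne : ∀ i : Fin k, (univ : Finset (Fin k)) ≠ ({i} : Finset (Fin k)) := by
    intro i he
    have := congrArg Finset.card he
    simp at this
    omega
  have hmem : 2 * k ∈ {n | ∃ f : Fin a ⊕ Fin b → Finset (Fin k),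
      IsKRTDF (completeBipartiteGraph (Fin a) (Fin b)) k f ∧ ∑ v, (f v).card = n} := by
    refine ⟨f0, ⟨⟨?_, ?_⟩, ?_⟩⟩
    · intro v hv i
      rcases v with x | y
      · refine ⟨Sum.inr y0, krtd_adj_left x y0, ?_⟩
        simp [hf0]
      · refine ⟨Sum.inl x0, (krtd_adj_left x0 y).symm, ?_⟩
        simp [hf0]
    · intro v i hv
      exfalso
      rcases v with x | y <;> simp only [hf0] at hv <;> split at hv
      · exact huniv_ne i hv
      · exact (Finset.singleton_ne_empty i) hv.symm
      · exact huniv_ne i hv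
      · exact (Finset.singleton_ne_empty i) hv.symm
    · rw [Fintype.sum_sum_type]
      have hL : ∑ x : Fin a, (f0 (Sum.inl x)).card = k := by
        have : ∀ x : Fin a, (f0 (Sum.inl x)).card = if x = x0 then k else 0 := by
          intro x; simp only [hf0]; split <;> simp
        rw [Finset.sum_congr rfl (fun x _ => this x), Finset.sum_ite_eq' univ x0 (fun _ => k)]
        simp
      have hR : ∑ y : Fin b, (f0 (Sum.inr y)).card = k := by
        have : ∀ y : Fin b, (f0 (Sum.inr y)).card = if y = y0 then k else 0 := by
          intro y; simp only [hf0]; split <;> simp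
        rw [Finset.sum_congr rfl (fun y _ => this y), Finset.sum_ite_eq' univ y0 (fun _ => k)]
        simp
      rw [hL, hR]; ring
  refine le_antisymm (Nat.sInf_le hmem) (le_csInf ⟨2 * k, hmem⟩ ?_)
  rintro n ⟨f, hf, rfl⟩
  exact krtd_lower a b k hk hab h2 f hf
end

section
/- For any graph G and integers 1 ≤ k ≤ k', the k'-rainbow domination number satisfies γ_{rk'}(G) ≤ (k'/k) · γ_{rk}(G). -/
open SimpleGraph Finset

theorem rdnum_mono_frac {V : Type*} [Fintype V] (G : SimpleGraph V) (k k' : ℕ)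
    (hk : 1 ≤ k) (hkk' : k ≤ k') :
    k * rdnum G k' ≤ k' * rdnum G k := by
  haveI : NeZero k := ⟨by omega⟩
  have hkpos : 0 < k := hk
  -- the defining set for rdnum G k is nonempty (take the all-colors function)
  have hne : {n | ∃ f : V → Finset (Fin k), IsKRDF G k f ∧ ∑ v, (f v).card = n}.Nonempty := by
    refine ⟨_, fun _ => (Finset.univ : Finset (Fin k)), ?_, rfl⟩
    intro v hv
    exact absurd hv Finset.univ_nonempty.ne_empty
  obtain ⟨f, hf, hw⟩ := Nat.sInf_mem hne
  -- the projection Fin k' → Fin k with rotation r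
  let π : Fin k → Fin k' → Fin k := fun r j => (⟨j.val % k, Nat.mod_lt _ hkpos⟩ : Fin k) + r
  -- rotated lifts of f
  let g : Fin k → V → Finset (Fin k') := fun r v => Finset.univ.filter (fun j => π r j ∈ f v)
  have hmem : ∀ r v j, j ∈ g r v ↔ π r j ∈ f v := by
    intro r v j; simp [g]
  -- surjectivity of π r
  have hsurj : ∀ r (i : Fin k), ∃ j : Fin k', π r j = i := by
    intro r i
    refine ⟨Fin.castLE hkk' (i - r), ?_⟩
    have h1 : ((Fin.castLE hkk' (i - r)) : Fin k').val = (i - r).val := rfl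
    have h2 : (⟨(i - r).val % k, Nat.mod_lt _ hkpos⟩ : Fin k) = i - r := by
      apply Fin.ext
      simp [Nat.mod_eq_of_lt (i - r).isLt]
    simp only [π, h1, h2, sub_add_cancel]
  -- each g r is a k'RDF
  have hkrdf : ∀ r, IsKRDF G k' (g r) := by
    intro r v hv i
    have hfv : f v = ∅ := by
      by_contra hfv
      obtain ⟨x, hx⟩ := Finset.nonempty_iff_ne_empty.2 hfv
      obtain ⟨j, hj⟩ := hsurj r x
      have : j ∈ g r v := (hmem r v j).2 (hj ▸ hx)
      simp [hv] at this
    obtain ⟨u, hadj, hu⟩ := hf v hfv (π r i)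
    exact ⟨u, hadj, (hmem r u i).2 hu⟩
  -- weight of each g r at v, summed over rotations
  have hweight : ∀ v, ∑ r : Fin k, (g r v).card = k' * (f v).card := by
    intro v
    have hcard : ∀ r, (g r v).card = ∑ j : Fin k', if π r j ∈ f v then 1 else 0 := by
      intro r
      simp only [g]
      rw [Finset.card_filter]
    calc ∑ r : Fin k, (g r v).card
        = ∑ r : Fin k, ∑ j : Fin k', (if π r j ∈ f v then 1 else 0) := by
          simp_rw [hcard]
      _ = ∑ j : Fin k', ∑ r : Fin k, (if π r j ∈ f v then 1 else 0) :=
          Finset.sum_comm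
      _ = ∑ j : Fin k', (f v).card := by
          refine Finset.sum_congr rfl fun j _ => ?_
          have := Fintype.sum_equiv
            (Equiv.addLeft (⟨j.val % k, Nat.mod_lt _ hkpos⟩ : Fin k))
            (fun r : Fin k => if π r j ∈ f v then (1:ℕ) else 0)
            (fun i : Fin k => if i ∈ f v then (1:ℕ) else 0)
            (fun r => rfl)
          rw [this, Finset.card_eq_sum_ones, Finset.sum_ite_mem]
          simp
      _ = k' * (f v).card := by simp [mul_comm]
  have htotal : ∑ r : Fin k, ∑ v, (g r v).card = k' * ∑ v, (f v).card := by
    rw [Finset.sum_comm]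
    simp_rw [hweight]
    rw [← Finset.mul_sum]
  -- pigeonhole: some rotation r has k * weight(g r) ≤ k' * weight(f)
  have hpig : ∃ r : Fin k, k * (∑ v, (g r v).card) ≤ k' * ∑ v, (f v).card := by
    by_contra h
    push_neg at h
    have hlt : ∑ r : Fin k, k' * ∑ v, (f v).card < ∑ r : Fin k, k * (∑ v, (g r v).card) := by
      apply Finset.sum_lt_sum_of_nonempty Finset.univ_nonempty
      intro r _; exact h r
    have h1 : ∑ r : Fin k, k * (∑ v, (g r v).card) = k * (k' * ∑ v, (f v).card) := by
      rw [← htotal, Finset.mul_sum]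
    have h2 : ∑ r : Fin k, k' * ∑ v, (f v).card = k * (k' * ∑ v, (f v).card) := by
      simp [Finset.sum_const, Finset.card_univ]
    rw [h1, h2] at hlt
    exact lt_irrefl _ hlt
  obtain ⟨r, hr⟩ := hpig
  have hle : rdnum G k' ≤ ∑ v, (g r v).card :=
    Nat.sInf_le ⟨g r, hkrdf r, rfl⟩
  calc k * rdnum G k' ≤ k * (∑ v, (g r v).card) := Nat.mul_le_mul_left _ hle
    _ ≤ k' * ∑ v, (f v).card := hr
    _ = k' * rdnum G k := by unfold rdnum; rw [hw]
end

section
/- For any graph G and integer k ≥ 2, γ_{(k−1)rt}(G) ≤ γ_{krt}(G). -/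
open SimpleGraph Finset

lemma exists_g_big {V : Type*} [Fintype V] (G : SimpleGraph V) (m : ℕ) (hm : 2 ≤ m)
    (f : V → Finset (Fin (m+1))) (hf : IsKRTDF G (m+1) f) :
    ∃ g : V → Finset (Fin m), IsKRTDF G m g ∧ ∑ v, (g v).card ≤ ∑ v, (f v).card := by
  classical
  set φ : Fin (m+1) → Fin m := fun i => if h : (i : ℕ) < m then ⟨i, h⟩ else ⟨0, by omega⟩ with hφ
  have hφ0 : φ 0 = ⟨0, by omega⟩ := by
    simp only [hφ]; rw [dif_pos (show ((0 : Fin (m+1)) : ℕ) < m by rw [Fin.val_zero]; omega)]; exact Fin.ext (Fin.val_zero (m+1))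
  have hφlast : φ (Fin.last m) = ⟨0, by omega⟩ := by simp [hφ]
  have hφsmall : ∀ (j : Fin m), φ ⟨(j : ℕ), by omega⟩ = j := by
    intro j; simp [hφ, j.isLt]
  set g : V → Finset (Fin m) := fun v =>
    if f v = {(0 : Fin (m+1)), Fin.last m} then ({⟨0, by omega⟩, ⟨1, by omega⟩} : Finset (Fin m))
    else (f v).image φ with hg
  have c1 : ({⟨0, by omega⟩, ⟨1, by omega⟩} : Finset (Fin m)).card = 2 := by
    rw [Finset.card_insert_of_notMem (by simp [Fin.ext_iff]), Finset.card_singleton]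
  have c2 : ({(0 : Fin (m+1)), Fin.last m} : Finset (Fin (m+1))).card = 2 := by
    rw [Finset.card_insert_of_notMem (by simp [Fin.ext_iff, Fin.last]; omega),
      Finset.card_singleton]
  have hmem : ∀ u i, i ∈ f u → φ i ∈ g u := by
    intro u i hi
    by_cases hc : f u = {(0 : Fin (m+1)), Fin.last m}
    · rw [hc] at hi
      simp only [mem_insert, mem_singleton] at hi
      have : φ i = ⟨0, by omega⟩ := by rcases hi with h | h <;> simp [h, hφ0, hφlast]
      simp [hg, hc, this]
    · simp only [hg, if_neg hc]
      exact mem_image_of_mem φ hi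
  have hempty : ∀ v, g v = ∅ → f v = ∅ := by
    intro v hv
    by_cases hc : f v = {(0 : Fin (m+1)), Fin.last m}
    · exfalso; simp [hg, hc] at hv
    · simpa [hg, if_neg hc, Finset.image_eq_empty] using hv
  refine ⟨g, ⟨?_, ?_⟩, ?_⟩
  · -- RDF
    intro v hv j
    obtain ⟨u, hadj, hiu⟩ := hf.1 v (hempty v hv) ⟨(j : ℕ), by omega⟩
    exact ⟨u, hadj, by have := hmem u _ hiu; rwa [hφsmall] at this⟩
  · -- total condition
    intro v j hgv
    have hc : f v ≠ {(0 : Fin (m+1)), Fin.last m} := by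
      intro hc
      rw [hg] at hgv; simp only [if_pos hc] at hgv
      have h1 := c1
      rw [hgv, Finset.card_singleton] at h1
      omega
    have himg : (f v).image φ = {j} := by simpa [hg, if_neg hc] using hgv
    have hnev : (f v).Nonempty := by
      by_contra h
      rw [not_nonempty_iff_eq_empty] at h
      rw [h, Finset.image_empty] at himg
      exact (Finset.singleton_ne_empty j) himg.symm
    obtain ⟨i, hi⟩ := hnev
    have hmemj : ∀ c, c ∈ f v → φ c = j := by
      intro c hc'
      have : φ c ∈ ({j} : Finset (Fin m)) := himg ▸ mem_image_of_mem φ hc'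
      simpa using this
    have hsingle : f v = {i} := by
      by_contra hns
      obtain ⟨a, ha, hai⟩ : ∃ a ∈ f v, a ≠ i := by
        by_contra h
        push_neg at h
        exact hns (Finset.eq_singleton_iff_unique_mem.2 ⟨hi, h⟩)
      have hcol : ∀ a b : Fin (m+1), a ≠ b → φ a = φ b →
          (a = 0 ∨ a = Fin.last m) ∧ (b = 0 ∨ b = Fin.last m) := by
        intro a b hab he
        simp only [hφ] at he
        by_cases h1 : (a : ℕ) < m <;> by_cases h2 : (b : ℕ) < m <;>
          simp only [dif_pos, dif_neg, h1, h2] at he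
        · exact absurd (Fin.ext (by simpa [Fin.ext_iff] using he)) hab
        · have hb : b = Fin.last m := Fin.ext (by have := b.isLt; simp [Fin.last]; omega)
          have ha0 : a = 0 := Fin.ext (by rw [Fin.val_zero]; exact congrArg Fin.val he)
          exact ⟨Or.inl ha0, Or.inr hb⟩
        · have ha' : a = Fin.last m := Fin.ext (by have := a.isLt; simp [Fin.last]; omega)
          have hb0 : b = 0 := Fin.ext (by rw [Fin.val_zero]; exact congrArg Fin.val he.symm)
          exact ⟨Or.inr ha', Or.inl hb0⟩
        · have ha' : a = Fin.last m := Fin.ext (by have := a.isLt; simp [Fin.last]; omega)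
          have hb' : b = Fin.last m := Fin.ext (by have := b.isLt; simp [Fin.last]; omega)
          exact absurd (ha'.trans hb'.symm) hab
      have hai' := hcol a i hai ((hmemj a ha).trans (hmemj i hi).symm)
      have h0 : (0 : Fin (m+1)) ∈ f v ∧ Fin.last m ∈ f v := by
        rcases hai'.1 with h | h <;> rcases hai'.2 with h' | h'
        · exact absurd (h.trans h'.symm) hai
        · exact ⟨h ▸ ha, h' ▸ hi⟩
        · exact ⟨h' ▸ hi, h ▸ ha⟩
        · exact absurd (h.trans h'.symm) hai
      have hj0 : (j : ℕ) = 0 := by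
        have hja := hmemj a ha
        rcases hai'.1 with h | h
        · rw [h, hφ0] at hja; simpa [Fin.ext_iff] using hja.symm
        · rw [h, hφlast] at hja; simpa [Fin.ext_iff] using hja.symm
      apply hc
      apply Finset.Subset.antisymm
      · intro c hc'
        have hcj := hmemj c hc'
        simp only [hφ] at hcj
        by_cases h1 : (c : ℕ) < m
        · rw [dif_pos h1] at hcj
          have hc0 : c = 0 := by
            have : (c : ℕ) = (j : ℕ) := by simpa [Fin.ext_iff] using hcj
            exact Fin.ext (by simpa using this.trans hj0)
          simp [hc0]
        · have : c = Fin.last m := Fin.ext (by have := c.isLt; simp [Fin.last]; omega)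
          simp [this]
      · intro c hc'
        simp only [mem_insert, mem_singleton] at hc'
        rcases hc' with h | h
        · exact h ▸ h0.1
        · exact h ▸ h0.2
    have hji : φ i = j := hmemj i hi
    obtain ⟨u, hadj, hiu⟩ := hf.2 v i hsingle
    exact ⟨u, hadj, hji ▸ hmem u i hiu⟩
  · -- weight
    apply Finset.sum_le_sum
    intro v _
    by_cases hc : f v = {(0 : Fin (m+1)), Fin.last m}
    · simp only [hg]
      rw [if_pos hc, c1, hc, c2]
    · simp only [hg]
      rw [if_neg hc]
      exact Finset.card_image_le


lemma no_one_rtdf {V : Type*} (G : SimpleGraph V) (v : V) (hv : ∀ u, ¬ G.Adj v u)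
    (g : V → Finset (Fin 1)) : ¬ IsKRTDF G 1 g := by
  intro hg
  by_cases h : g v = ∅
  · obtain ⟨u, hadj, -⟩ := hg.1 v h 0
    exact hv u hadj
  · have hsub : g v ⊆ {0} := by intro x _; simp [Subsingleton.elim x 0]
    rcases Finset.subset_singleton_iff.mp hsub with h' | h'
    · exact h h'
    · obtain ⟨u, hadj, -⟩ := hg.2 v 0 h'
      exact hv u hadj

lemma exists_g_one {V : Type*} [Fintype V] (G : SimpleGraph V)
    (hniso : ∀ v : V, ∃ u, G.Adj v u)
    (f : V → Finset (Fin 2)) (hf : IsKRTDF G 2 f) :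
    ∃ g : V → Finset (Fin 1), IsKRTDF G 1 g ∧ ∑ v, (g v).card ≤ ∑ v, (f v).card := by
  classical
  set nbr : V → V := fun v => (hniso v).choose with hnbrdef
  have hnbr : ∀ v, G.Adj v (nbr v) := fun v => (hniso v).choose_spec
  set S : Finset V := univ.filter (fun v => f v ≠ ∅) with hS
  set Bad : Finset V := univ.filter
    (fun v => f v ≠ ∅ ∧ ∀ u, G.Adj v u → f u = ∅) with hBad
  set T : Finset V := S ∪ Bad.image nbr with hT
  set g : V → Finset (Fin 1) := fun v => if v ∈ T then ({0} : Finset (Fin 1)) else ∅ with hg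
  have hBadS : Bad ⊆ S := by
    intro v hv
    simp only [hBad, mem_filter] at hv
    simp only [hS, mem_filter]
    exact ⟨hv.1, hv.2.1⟩
  have hSmem : ∀ u, f u ≠ ∅ → u ∈ T := by
    intro u hu
    exact Finset.mem_union_left _ (by simp [hS, hu])
  refine ⟨g, ⟨?_, ?_⟩, ?_⟩
  · intro v hv i
    have hvT : v ∉ T := by
      intro h; rw [hg] at hv; simp [h] at hv
    have hfv : f v = ∅ := by
      by_contra h
      exact hvT (hSmem v h)
    obtain ⟨u, hadj, hmem⟩ := hf.1 v hfv 0
    refine ⟨u, hadj, ?_⟩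
    have : u ∈ T := hSmem u (fun h => by simp [h] at hmem)
    simp [hg, this, Subsingleton.elim i 0]
  · intro v i hv
    have hvT : v ∈ T := by
      by_contra h
      rw [hg] at hv; simp only [if_neg h] at hv
      exact (Finset.singleton_ne_empty i) hv.symm
    suffices h : ∃ u, G.Adj v u ∧ u ∈ T by
      obtain ⟨u, hadj, huT⟩ := h
      exact ⟨u, hadj, by simp [hg, huT, Subsingleton.elim i 0]⟩
    rcases Finset.mem_union.mp hvT with hvS | hvI
    · by_cases hvB : v ∈ Bad
      · exact ⟨nbr v, hnbr v, Finset.mem_union_right _ (Finset.mem_image_of_mem nbr hvB)⟩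
      · simp only [hBad, mem_filter, mem_univ, true_and, not_and, not_forall] at hvB
        have hfv : f v ≠ ∅ := by simpa [hS] using hvS
        obtain ⟨u, hadj, hfu⟩ := hvB hfv
        push_neg at hfu
        exact ⟨u, hadj, hSmem u hfu.ne_empty⟩
    · obtain ⟨w, hw, rfl⟩ := Finset.mem_image.mp hvI
      have hfw : f w ≠ ∅ := by
        simp only [hBad, mem_filter] at hw
        exact hw.2.1
      exact ⟨w, (hnbr w).symm, hSmem w hfw⟩
  · -- weight
    have hgcard : ∀ v, (g v).card = if v ∈ T then 1 else 0 := by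
      intro v; by_cases h : v ∈ T <;> simp [hg, h]
    have hsumg : ∑ v, (g v).card = T.card := by
      simp only [hgcard]
      rw [Finset.sum_ite_mem, Finset.univ_inter, Finset.card_eq_sum_ones]
    have hBadcard : ∀ v ∈ Bad, 2 ≤ (f v).card := by
      intro v hv
      simp only [hBad, mem_filter, mem_univ, true_and] at hv
      by_contra h
      push_neg at h
      interval_cases hcard : (f v).card
      · exact hv.1 (Finset.card_eq_zero.mp hcard)
      · obtain ⟨i, hi⟩ := Finset.card_eq_one.mp hcard
        obtain ⟨u, hadj, hmem⟩ := hf.2 v i hi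
        rw [hv.2 u hadj] at hmem
        simp at hmem
    have hsums : S.card + Bad.card ≤ ∑ v, (f v).card := by
      have h1 : ∀ v : V, (if v ∈ S then 1 else 0) + (if v ∈ Bad then 1 else 0) ≤ (f v).card := by
        intro v
        by_cases hvB : v ∈ Bad
        · have := hBadcard v hvB
          rw [if_pos hvB, if_pos (hBadS hvB)]
          omega
        · by_cases hvS : v ∈ S
          · have : f v ≠ ∅ := by simpa [hS] using hvS
            have hpos : 0 < (f v).card := Finset.card_pos.mpr (Finset.nonempty_iff_ne_empty.mpr this)
            rw [if_neg hvB, if_pos hvS]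
            omega
          · rw [if_neg hvB, if_neg hvS]
            simp
      calc S.card + Bad.card
          = ∑ v, ((if v ∈ S then 1 else 0) + (if v ∈ Bad then 1 else 0)) := by
            rw [Finset.sum_add_distrib, Finset.sum_ite_mem, Finset.sum_ite_mem,
              Finset.univ_inter, Finset.univ_inter, Finset.card_eq_sum_ones,
              Finset.card_eq_sum_ones]
        _ ≤ ∑ v, (f v).card := Finset.sum_le_sum (fun v _ => h1 v)
    calc ∑ v, (g v).card = T.card := hsumg
      _ ≤ S.card + (Bad.image nbr).card := Finset.card_union_le _ _
      _ ≤ S.card + Bad.card := Nat.add_le_add_left Finset.card_image_le _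
      _ ≤ ∑ v, (f v).card := hsums

theorem rtdnum_pred_le {V : Type*} [Fintype V] (G : SimpleGraph V) (k : ℕ) (hk : 2 ≤ k) :
    rtdnum G (k - 1) ≤ rtdnum G k := by
  classical
  obtain ⟨m, rfl⟩ : ∃ m, k = m + 1 := ⟨k - 1, by omega⟩
  have hm : 1 ≤ m := by omega
  have hsub : m + 1 - 1 = m := rfl
  rw [hsub]
  unfold rtdnum
  have hne : {n | ∃ f : V → Finset (Fin (m+1)), IsKRTDF G (m+1) f ∧ ∑ v, (f v).card = n}.Nonempty := by
    refine ⟨∑ _v : V, (Finset.univ : Finset (Fin (m+1))).card, fun _ => Finset.univ, ⟨?_, ?_⟩, rfl⟩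
    · intro v hv
      exact absurd hv Finset.univ_nonempty.ne_empty
    · intro v i hv
      have := congrArg Finset.card hv
      rw [Finset.card_univ, Fintype.card_fin, Finset.card_singleton] at this
      omega
  obtain ⟨f, hf, hfsum⟩ := Nat.sInf_mem hne
  rcases eq_or_lt_of_le hm with hm1 | hm2
  · subst hm1
    by_cases hiso : ∃ v : V, ∀ u, ¬ G.Adj v u
    · obtain ⟨v, hv⟩ := hiso
      have hemp : {n | ∃ g : V → Finset (Fin 1), IsKRTDF G 1 g ∧ ∑ v, (g v).card = n} = ∅ := by
        ext n
        simp only [Set.mem_setOf_eq, Set.mem_empty_iff_false, iff_false]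
        rintro ⟨g, hg, -⟩
        exact no_one_rtdf G v hv g hg
      rw [hemp, Nat.sInf_empty]
      exact Nat.zero_le _
    · push_neg at hiso
      obtain ⟨g, hg, hle⟩ := exists_g_one G hiso f hf
      exact le_trans (Nat.sInf_le ⟨g, hg, rfl⟩) (hfsum ▸ hle)
  · obtain ⟨g, hg, hle⟩ := exists_g_big G m hm2 f hf
    exact le_trans (Nat.sInf_le ⟨g, hg, rfl⟩) (hfsum ▸ hle)
end

section
/- For any graph G without isolated vertices and any integer k ≥ 1, γ_t(G) ≤ γ_{krt}(G) ≤ k · γ_t(G). -/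
open SimpleGraph Finset

private lemma aux_two_le {α : Type*} {s : Finset α} (h0 : s ≠ ∅) (h1 : s.card ≠ 1) :
    2 ≤ s.card := by
  have := Finset.card_pos.mpr (Finset.nonempty_iff_ne_empty.mpr h0)
  omega

private lemma aux_indicator_le {α : Type*} [DecidableEq α] (s : Finset α) :
    (if s ≠ ∅ then 1 else 0) + (if 2 ≤ s.card then 1 else 0) ≤ s.card := by
  by_cases h0 : s = ∅
  · simp [h0]
  · have := Finset.card_pos.mpr (Finset.nonempty_iff_ne_empty.mpr h0)
    split_ifs <;> omega

theorem totdomnum_le_rtdnum_le {V : Type*} [Fintype V] (G : SimpleGraph V) (k : ℕ)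
    (hk : 1 ≤ k) (hiso : ∀ v : V, ∃ u, G.Adj v u) :
    totdomnum G ≤ rtdnum G k ∧ rtdnum G k ≤ k * totdomnum G := by
  classical
  choose g hg using hiso
  obtain ⟨i0⟩ : Nonempty (Fin k) := ⟨⟨0, hk⟩⟩
  -- nonempty: totdom set
  have htdne : {n | ∃ D : Finset V, (∀ v, ∃ u ∈ D, G.Adj u v) ∧ D.card = n}.Nonempty := by
    exact ⟨(Finset.univ : Finset V).card, Finset.univ,
      fun v => ⟨g v, Finset.mem_univ _, (hg v).symm⟩, rfl⟩
  have hrtne : {n | ∃ f : V → Finset (Fin k), IsKRTDF G k f ∧ ∑ v, (f v).card = n}.Nonempty := by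
    refine ⟨_, fun _ => (Finset.univ : Finset (Fin k)), ⟨?_, ?_⟩, rfl⟩
    · intro v hv i
      exact absurd hv (by simp [← Finset.card_eq_zero]; omega)
    · intro v i _
      exact ⟨g v, hg v, Finset.mem_univ _⟩
  constructor
  · -- totdomnum ≤ rtdnum
    obtain ⟨f, hf, hsum⟩ := Nat.sInf_mem hrtne
    set supp := Finset.univ.filter (fun v => f v ≠ ∅) with hsupp
    set big := Finset.univ.filter (fun v => 2 ≤ (f v).card) with hbig
    set D := supp ∪ big.image g with hD
    have hdom : ∀ v, ∃ u ∈ D, G.Adj u v := by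
      intro v
      by_cases h0 : f v = ∅
      · obtain ⟨u, hu, hiu⟩ := hf.1 v h0 i0
        refine ⟨u, Finset.mem_union_left _ ?_, hu.symm⟩
        simp [hsupp, Finset.mem_filter]
        exact fun h => by simp [h] at hiu
      · by_cases h1 : (f v).card = 1
        · obtain ⟨i, hi⟩ := Finset.card_eq_one.mp h1
          obtain ⟨u, hu, hiu⟩ := hf.2 v i hi
          refine ⟨u, Finset.mem_union_left _ ?_, hu.symm⟩
          simp [hsupp, Finset.mem_filter]
          exact fun h => by simp [h] at hiu
        · have h2 : 2 ≤ (f v).card := aux_two_le h0 h1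
          refine ⟨g v, Finset.mem_union_right _ ?_, (hg v).symm⟩
          exact Finset.mem_image_of_mem g (by simp [hbig, h2])
    have hcard : D.card ≤ rtdnum G k := by
      calc D.card ≤ supp.card + (big.image g).card := Finset.card_union_le _ _
        _ ≤ supp.card + big.card := by
            exact Nat.add_le_add_left (Finset.card_image_le) _
        _ ≤ ∑ v, (f v).card := by
            rw [hsupp, hbig, Finset.card_filter, Finset.card_filter,
              ← Finset.sum_add_distrib]
            exact Finset.sum_le_sum fun v _ => aux_indicator_le (f v)
        _ = rtdnum G k := hsum
    exact le_trans (Nat.sInf_le ⟨D, hdom, rfl⟩) hcard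
  · -- rtdnum ≤ k * totdomnum
    obtain ⟨D, hD, hcard⟩ := Nat.sInf_mem htdne
    set f : V → Finset (Fin k) := fun v => if v ∈ D then Finset.univ else ∅ with hf
    have hrtdf : IsKRTDF G k f := by
      constructor
      · intro v hv i
        obtain ⟨u, huD, hadj⟩ := hD v
        refine ⟨u, hadj.symm, ?_⟩
        simp [hf, huD]
      · intro v i hvi
        have hvD : v ∈ D := by
          by_contra h
          simp [hf, h] at hvi
        obtain ⟨u, huD, hadj⟩ := hD v
        exact ⟨u, hadj.symm, by simp [hf, huD]⟩
    have hw : ∑ v, (f v).card = k * D.card := by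
      rw [hf]
      simp only [apply_ite Finset.card, Finset.card_univ, Fintype.card_fin,
        Finset.card_empty]
      rw [Finset.sum_ite_mem, Finset.univ_inter, Finset.sum_const, smul_eq_mul,
        Nat.mul_comm]
    calc rtdnum G k ≤ k * D.card := Nat.sInf_le ⟨f, hrtdf, hw⟩
      _ = k * totdomnum G := by rw [hcard, totdomnum]
end

section
/- For any graph G and integer k ≥ 2, γ_{rk}(G) ≤ γ_{krt}(G) ≤ 2 · γ_{rk}(G). -/
open SimpleGraph Finset

theorem rdnum_le_rtdnum_le {V : Type*} [Fintype V] (G : SimpleGraph V) (k : ℕ) (hk : 2 ≤ k) :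
    rdnum G k ≤ rtdnum G k ∧ rtdnum G k ≤ 2 * rdnum G k := by
  have hk0 : (0 : ℕ) < k := by omega
  -- the all-colors function is a kRTDF, so the rtdnum set is nonempty
  have huniv : IsKRTDF G k (fun _ => (Finset.univ : Finset (Fin k))) := by
    constructor
    · intro v hv
      exfalso
      have : (⟨0, hk0⟩ : Fin k) ∈ (Finset.univ : Finset (Fin k)) := Finset.mem_univ _
      simp only at hv
      rw [hv] at this
      exact absurd this (Finset.notMem_empty _)
    · intro v i hvi
      exfalso
      have h1 : (Finset.univ : Finset (Fin k)).card = k := by simp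
      simp only at hvi
      rw [hvi, Finset.card_singleton] at h1
      omega
  have hT : {n | ∃ f : V → Finset (Fin k), IsKRTDF G k f ∧ ∑ v, (f v).card = n}.Nonempty :=
    ⟨_, fun _ => Finset.univ, huniv, rfl⟩
  have hS : {n | ∃ f : V → Finset (Fin k), IsKRDF G k f ∧ ∑ v, (f v).card = n}.Nonempty :=
    ⟨_, fun _ => Finset.univ, huniv.1, rfl⟩
  constructor
  · -- rdnum ≤ rtdnum
    obtain ⟨f, hf, hsum⟩ := Nat.sInf_mem hT
    exact Nat.sInf_le ⟨f, hf.1, hsum⟩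
  · -- rtdnum ≤ 2 * rdnum
    obtain ⟨f, hf, hsum⟩ := Nat.sInf_mem hS
    -- "other" color
    have hk1 : 1 < k := hk
    obtain ⟨o, hoi⟩ : ∃ o : Fin k → Fin k, ∀ i, o i ≠ i := by
      refine ⟨fun i => if i = ⟨0, hk0⟩ then ⟨1, hk1⟩ else ⟨0, hk0⟩, fun i => ?_⟩
      dsimp only
      split
      · rename_i h
        subst h
        intro heq
        exact absurd (congrArg Fin.val heq) (by simp)
      · rename_i h
        exact fun heq => h heq.symm
    obtain ⟨g, hg⟩ : ∃ g : V → Finset (Fin k), ∀ v, g v = f v ∪ (f v).image o :=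
      ⟨_, fun _ => rfl⟩
    have hgsub : ∀ v, f v ⊆ g v := fun v => (hg v) ▸ Finset.subset_union_left
    have hgKRDF : IsKRDF G k g := by
      intro v hv i
      have hfv : f v = ∅ := by
        rw [hg v] at hv
        exact (Finset.union_eq_empty.mp hv).1
      obtain ⟨u, hadj, hiu⟩ := hf v hfv i
      exact ⟨u, hadj, hgsub u hiu⟩
    have hgsing : ∀ v (i : Fin k), g v ≠ {i} := by
      intro v i hvi
      have hfv : f v = {i} := by
        have hsub : f v ⊆ {i} := hvi ▸ hgsub v
        have hne : (f v).Nonempty := by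
          rcases Finset.eq_empty_or_nonempty (f v) with h | h
          · exfalso
            have : g v = ∅ := by rw [hg v, h]; simp
            rw [hvi] at this
            exact absurd this (Finset.singleton_ne_empty i)
          · exact h
        exact Finset.eq_singleton_iff_nonempty_unique_mem.mpr
          ⟨hne, fun x hx => Finset.mem_singleton.mp (hsub hx)⟩
      have hoimem : o i ∈ g v := by
        rw [hg v]
        apply Finset.mem_union_right
        rw [hfv]
        exact Finset.mem_image_of_mem o (Finset.mem_singleton_self i)
      rw [hvi, Finset.mem_singleton] at hoimem
      exact hoi i hoimem
    have hgKRTDF : IsKRTDF G k g := ⟨hgKRDF, fun v i hvi => absurd hvi (hgsing v i)⟩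
    have hcard : ∀ v, (g v).card ≤ 2 * (f v).card := by
      intro v
      calc (g v).card ≤ (f v).card + ((f v).image o).card := by
            rw [hg v]; exact Finset.card_union_le _ _
        _ ≤ (f v).card + (f v).card := by
            exact Nat.add_le_add_left (Finset.card_image_le) _
        _ = 2 * (f v).card := by ring
    calc rtdnum G k ≤ ∑ v, (g v).card := Nat.sInf_le ⟨g, hgKRTDF, rfl⟩
      _ ≤ ∑ v, 2 * (f v).card := Finset.sum_le_sum (fun v _ => hcard v)
      _ = 2 * ∑ v, (f v).card := by rw [Finset.mul_sum]
      _ = 2 * rdnum G k := by rw [hsum]; rfl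
end

section
/- For any graph G and integer k ≥ 2, γ_{krt}(G) ≥ (2k/(k+1)) · γ(G). -/
open SimpleGraph Finset

lemma ore_lemma {V : Type*} [Fintype V] [DecidableEq V] (G : SimpleGraph V) (X : Finset V)
    (hX : ∀ x ∈ X, ∃ y ∈ X, G.Adj x y) :
    ∃ T, T ⊆ X ∧ 2 * T.card ≤ X.card ∧ ∀ x ∈ X, x ∈ T ∨ ∃ t ∈ T, G.Adj x t := by
  classical
  set P : Finset V → Prop := fun D => ∀ x ∈ X, x ∈ D ∨ ∃ t ∈ D, G.Adj x t with hP
  have hXP : X ∈ X.powerset.filter P := by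
    rw [Finset.mem_filter, Finset.mem_powerset]
    exact ⟨le_refl X, fun x hx => Or.inl hx⟩
  obtain ⟨D, hDmem, hDmin⟩ := Finset.exists_min_image (X.powerset.filter P) Finset.card ⟨X, hXP⟩
  rw [Finset.mem_filter, Finset.mem_powerset] at hDmem
  obtain ⟨hDX, hDdom⟩ := hDmem
  by_cases hc : 2 * D.card ≤ X.card
  · exact ⟨D, hDX, hc, hDdom⟩
  · refine ⟨X \ D, Finset.sdiff_subset, ?_, ?_⟩
    · have h1 : (X \ D).card = X.card - D.card := Finset.card_sdiff_of_subset hDX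
      have h2 : D.card ≤ X.card := Finset.card_le_card hDX
      omega
    · intro x hx
      by_cases hxD : x ∈ D
      · have herase : ¬ P (D.erase x) := by
          intro hPe
          have hmem : D.erase x ∈ X.powerset.filter P := by
            rw [Finset.mem_filter, Finset.mem_powerset]
            exact ⟨(Finset.erase_subset _ _).trans hDX, hPe⟩
          have h3 := hDmin _ hmem
          have hlt : (D.erase x).card < D.card := Finset.card_erase_lt_of_mem hxD
          omega
        obtain ⟨y, hyX, hyD, hyadj⟩ :
            ∃ y ∈ X, y ∉ D.erase x ∧ ∀ t ∈ D.erase x, ¬ G.Adj y t := by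
          by_contra hcon
          push_neg at hcon
          refine herase fun y hy => ?_
          by_cases h : y ∈ D.erase x
          · exact Or.inl h
          · exact Or.inr (hcon y hy h)
        by_cases hyx : y = x
        · subst hyx
          obtain ⟨z, hzX, hadj⟩ := hX y hx
          have hzy : z ≠ y := (G.ne_of_adj hadj).symm
          have hzD : z ∉ D := fun hz => hyadj z (Finset.mem_erase.mpr ⟨hzy, hz⟩) hadj
          exact Or.inr ⟨z, Finset.mem_sdiff.mpr ⟨hzX, hzD⟩, hadj⟩
        · have hyDfull : y ∉ D := fun h => hyD (Finset.mem_erase.mpr ⟨hyx, h⟩)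
          rcases hDdom y hyX with h | ⟨t, htD, htadj⟩
          · exact absurd h hyDfull
          · have htx : t = x := by
              by_contra hne
              exact hyadj t (Finset.mem_erase.mpr ⟨hne, htD⟩) htadj
            subst htx
            exact Or.inr ⟨y, Finset.mem_sdiff.mpr ⟨hyX, hyDfull⟩, htadj.symm⟩
      · exact Or.inl (Finset.mem_sdiff.mpr ⟨hx, hxD⟩)

lemma card_eq_sum_ite {V : Type*} [Fintype V] [DecidableEq V] (s : Finset V) :
    s.card = ∑ v : V, (if v ∈ s then 1 else 0) := by
  rw [← Finset.card_filter]
  congr 1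
  rw [Finset.filter_mem_eq_inter, Finset.univ_inter]

theorem rtdnum_ge_domnum {V : Type*} [Fintype V] (G : SimpleGraph V) (k : ℕ) (hk : 2 ≤ k) :
    2 * k * domnum G ≤ (k + 1) * rtdnum G k := by
  classical
  have hkfin : Nonempty (Fin k) := ⟨⟨0, by omega⟩⟩
  have hne : {n | ∃ f : V → Finset (Fin k), IsKRTDF G k f ∧ ∑ v, (f v).card = n}.Nonempty := by
    refine ⟨∑ v : V, (Finset.univ : Finset (Fin k)).card, fun _ => Finset.univ, ⟨?_, ?_⟩, rfl⟩
    · intro v hv i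
      exact absurd hv Finset.univ_nonempty.ne_empty
    · intro v i hvi
      have hcard := congrArg Finset.card hvi
      simp [Finset.card_univ] at hcard
      omega
  obtain ⟨f, ⟨hfr, hft⟩, hw⟩ := Nat.sInf_mem hne
  have hW : rtdnum G k = ∑ v, (f v).card := hw.symm
  clear hw hne
  -- sets of same-color adjacent singletons
  set Xs : Fin k → Finset V :=
    fun j => Finset.univ.filter (fun v => f v = {j} ∧ ∃ u, G.Adj v u ∧ f u = {j}) with hXs
  have hXprop : ∀ j, ∀ x ∈ Xs j, ∃ y ∈ Xs j, G.Adj x y := by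
    intro j x hx
    simp only [hXs, Finset.mem_filter, Finset.mem_univ, true_and] at hx
    obtain ⟨hx1, u, hadj, hu⟩ := hx
    refine ⟨u, ?_, hadj⟩
    simp only [hXs, Finset.mem_filter, Finset.mem_univ, true_and]
    exact ⟨hu, x, hadj.symm, hx1⟩
  choose T hT1 hT2 hT3 using fun j => ore_lemma G (Xs j) (hXprop j)
  set Tall : Finset V := Finset.univ.biUnion T with hTall
  set A : Fin k → Finset V :=
    fun i => Finset.univ.filter (fun v => i ∈ f v ∨ 2 ≤ (f v).card) with hA
  set D : Fin k → Finset V := fun i => A i ∪ Tall with hD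
  -- each D i is dominating
  have hdom : ∀ i, ∀ v ∉ D i, ∃ u ∈ D i, G.Adj u v := by
    intro i v hv
    have hvA : v ∉ A i := fun h => hv (Finset.mem_union_left _ h)
    have hvT : v ∉ Tall := fun h => hv (Finset.mem_union_right _ h)
    simp only [hA, Finset.mem_filter, Finset.mem_univ, true_and, not_or, not_le] at hvA
    obtain ⟨hvi, hvcard⟩ := hvA
    by_cases hempty : f v = ∅
    · obtain ⟨u, hadj, hiu⟩ := hfr v hempty i
      refine ⟨u, Finset.mem_union_left _ ?_, hadj.symm⟩
      simp only [hA, Finset.mem_filter, Finset.mem_univ, true_and]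
      exact Or.inl hiu
    · have hcard1 : (f v).card = 1 := by
        have := Finset.card_pos.mpr (Finset.nonempty_iff_ne_empty.mpr hempty)
        omega
      obtain ⟨j, hj⟩ := Finset.card_eq_one.mp hcard1
      obtain ⟨u, hadj, hju⟩ := hft v j hj
      by_cases huA : u ∈ A i
      · exact ⟨u, Finset.mem_union_left _ huA, hadj.symm⟩
      · simp only [hA, Finset.mem_filter, Finset.mem_univ, true_and, not_or, not_le] at huA
        obtain ⟨hui, hucard⟩ := huA
        have hucard1 : (f u).card = 1 := by
          have := Finset.card_pos.mpr ⟨j, hju⟩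
          omega
        obtain ⟨j', hj'⟩ := Finset.card_eq_one.mp hucard1
        have hjj' : j = j' := by
          rw [hj'] at hju; simpa using hju
        rw [← hjj'] at hj'
        have hvX : v ∈ Xs j := by
          simp only [hXs, Finset.mem_filter, Finset.mem_univ, true_and]
          exact ⟨hj, u, hadj, hj'⟩
        rcases hT3 j v hvX with h | ⟨t, htT, htadj⟩
        · exact absurd (Finset.mem_biUnion.mpr ⟨j, Finset.mem_univ j, h⟩) hvT
        · exact ⟨t, Finset.mem_union_right _
            (Finset.mem_biUnion.mpr ⟨j, Finset.mem_univ j, htT⟩), htadj.symm⟩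
  -- domination number bounds
  have hγ : ∀ i, domnum G ≤ (D i).card := fun i => Nat.sInf_le ⟨D i, hdom i, rfl⟩
  have hkγ : k * domnum G ≤ ∑ i : Fin k, (D i).card := by
    calc k * domnum G = ∑ _i : Fin k, domnum G := by
          simp [Finset.sum_const, Finset.card_univ, mul_comm]
      _ ≤ _ := Finset.sum_le_sum fun i _ => hγ i
  -- cardinality counting
  have hDcard : ∀ i, (D i).card ≤ (A i).card + (Tall \ A i).card := by
    intro i
    simp only [hD]
    calc (A i ∪ Tall).card = (A i ∪ (Tall \ A i)).card := by
          rw [Finset.union_sdiff_self_eq_union]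
      _ ≤ _ := Finset.card_union_le _ _
  have hTsub : ∀ j, T j ⊆ A j := by
    intro j t ht
    have h1 := hT1 j ht
    simp only [hXs, Finset.mem_filter, Finset.mem_univ, true_and] at h1
    simp only [hA, Finset.mem_filter, Finset.mem_univ, true_and]
    refine Or.inl ?_
    rw [h1.1]; simp
  have hTA : ∀ i, Tall \ A i ⊆ (Finset.univ.erase i).biUnion T := by
    intro i x hx
    rw [Finset.mem_sdiff] at hx
    obtain ⟨hxT, hxA⟩ := hx
    obtain ⟨j, -, hxj⟩ := Finset.mem_biUnion.mp hxT
    refine Finset.mem_biUnion.mpr ⟨j, Finset.mem_erase.mpr ⟨?_, Finset.mem_univ _⟩, hxj⟩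
    rintro rfl
    exact hxA (hTsub j hxj)
  have hTAcard : ∀ i, (Tall \ A i).card ≤ ∑ j ∈ Finset.univ.erase i, (T j).card :=
    fun i => (Finset.card_le_card (hTA i)).trans Finset.card_biUnion_le
  set S1 := ∑ j : Fin k, (T j).card with hS1
  have hsum_erase : ∑ i : Fin k, ∑ j ∈ Finset.univ.erase i, (T j).card = (k - 1) * S1 := by
    have h1 : ∀ i : Fin k, ∑ j ∈ Finset.univ.erase i, (T j).card + (T i).card = S1 :=
      fun i => Finset.sum_erase_add _ _ (Finset.mem_univ i)
    have h2 : ∑ i : Fin k,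
        (∑ j ∈ Finset.univ.erase i, (T j).card + (T i).card) = k * S1 := by
      simp only [h1]
      simp [Finset.card_univ, mul_comm]
    rw [Finset.sum_add_distrib] at h2
    have hk1 : (k - 1) * S1 + S1 = k * S1 := by
      have hkk : k - 1 + 1 = k := by omega
      calc (k - 1) * S1 + S1 = (k - 1 + 1) * S1 := by ring
        _ = k * S1 := by rw [hkk]
    omega
  -- sum of |A i|
  have hAsum : ∑ i : Fin k, (A i).card
      = ∑ v, (if 2 ≤ (f v).card then k else (f v).card) := by
    have h1 : ∀ i : Fin k, (A i).card
        = ∑ v : V, (if i ∈ f v ∨ 2 ≤ (f v).card then 1 else 0) := by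
      intro i; simp only [hA]; rw [Finset.card_filter]
    simp only [h1]
    rw [Finset.sum_comm]
    refine Finset.sum_congr rfl fun v _ => ?_
    by_cases h2 : 2 ≤ (f v).card
    · simp [h2, Finset.card_univ]
    · rw [if_neg h2]
      have h3 : ∀ i : Fin k, (i ∈ f v ∨ 2 ≤ (f v).card) ↔ i ∈ f v := fun i => by
        simp [h2]
      simp only [h3]
      exact (_root_.card_eq_sum_ite _).symm
  -- 2 * S1 ≤ number of singleton vertices
  have hXcard : ∀ v : V, ∑ j : Fin k, (if v ∈ Xs j then 1 else 0)
      ≤ (if (f v).card = 1 then 1 else 0) := by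
    intro v
    by_cases h1 : (f v).card = 1
    · rw [if_pos h1]
      obtain ⟨j0, hj0⟩ := Finset.card_eq_one.mp h1
      have huniq : ∀ j : Fin k, v ∈ Xs j → j = j0 := by
        intro j hj
        simp only [hXs, Finset.mem_filter, Finset.mem_univ, true_and] at hj
        have h5 := hj.1
        rw [hj0] at h5
        have h6 : j0 ∈ ({j} : Finset (Fin k)) := h5 ▸ Finset.mem_singleton_self j0
        exact (Finset.mem_singleton.mp h6).symm
      calc ∑ j : Fin k, (if v ∈ Xs j then 1 else 0)
          ≤ ∑ j : Fin k, (if j = j0 then 1 else 0) := by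
            refine Finset.sum_le_sum fun j _ => ?_
            by_cases hj : v ∈ Xs j
            · rw [if_pos hj, if_pos (huniq j hj)]
            · simp [hj]
        _ = 1 := by simp
    · have hno : ∀ j : Fin k, v ∉ Xs j := by
        intro j hj
        simp only [hXs, Finset.mem_filter, Finset.mem_univ, true_and] at hj
        exact h1 (by rw [hj.1]; simp)
      simp [hno, h1]
  have hS1n1 : 2 * S1 ≤ ∑ v, (if (f v).card = 1 then 1 else 0) := by
    calc 2 * S1 = ∑ j : Fin k, 2 * (T j).card := by rw [hS1, Finset.mul_sum]
      _ ≤ ∑ j : Fin k, (Xs j).card := Finset.sum_le_sum fun j _ => hT2 j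
      _ = ∑ j : Fin k, ∑ v : V, (if v ∈ Xs j then 1 else 0) := by
          refine Finset.sum_congr rfl fun j _ => ?_
          exact _root_.card_eq_sum_ite _
      _ = ∑ v : V, ∑ j : Fin k, (if v ∈ Xs j then 1 else 0) := Finset.sum_comm
      _ ≤ _ := Finset.sum_le_sum fun v _ => hXcard v
  -- per-vertex final inequality
  have hmain : 2 * (∑ v, (if 2 ≤ (f v).card then k else (f v).card))
      + (k - 1) * (∑ v, (if (f v).card = 1 then 1 else 0))
      ≤ (k + 1) * (∑ v, (f v).card) := by
    rw [Finset.mul_sum, Finset.mul_sum, Finset.mul_sum, ← Finset.sum_add_distrib]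
    refine Finset.sum_le_sum fun v _ => ?_
    rcases Nat.lt_or_ge (f v).card 2 with h | h
    · interval_cases h' : (f v).card
      · simp
      · simp; omega
    · rw [if_pos h, if_neg (by omega)]
      have h3 : (k + 1) * 2 ≤ (k + 1) * (f v).card := Nat.mul_le_mul_left _ h
      omega
  -- assemble
  have hDsum : ∑ i : Fin k, (D i).card
      ≤ (∑ v, (if 2 ≤ (f v).card then k else (f v).card)) + (k - 1) * S1 := by
    calc ∑ i : Fin k, (D i).card
        ≤ ∑ i : Fin k, ((A i).card + (Tall \ A i).card) :=
          Finset.sum_le_sum fun i _ => hDcard i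
      _ = ∑ i : Fin k, (A i).card + ∑ i : Fin k, (Tall \ A i).card :=
          Finset.sum_add_distrib
      _ ≤ ∑ i : Fin k, (A i).card
          + ∑ i : Fin k, ∑ j ∈ Finset.univ.erase i, (T j).card := by
          exact Nat.add_le_add_left (Finset.sum_le_sum fun i _ => hTAcard i) _
      _ = _ := by rw [hAsum, hsum_erase]
  rw [hW]
  calc 2 * k * domnum G = 2 * (k * domnum G) := by ring
    _ ≤ 2 * ((∑ v, (if 2 ≤ (f v).card then k else (f v).card)) + (k - 1) * S1) :=
        Nat.mul_le_mul_left 2 (hkγ.trans hDsum)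
    _ = 2 * (∑ v, (if 2 ≤ (f v).card then k else (f v).card)) + (k - 1) * (2 * S1) := by ring
    _ ≤ 2 * (∑ v, (if 2 ≤ (f v).card then k else (f v).card))
        + (k - 1) * (∑ v, (if (f v).card = 1 then 1 else 0)) := by
        have := Nat.mul_le_mul_left (k - 1) hS1n1
        omega
    _ ≤ (k + 1) * (∑ v, (f v).card) := hmain
end

section
/- If G is a bipartite graph, then γ_{2rt}(G) = 2 · γ(G). -/
open SimpleGraph Finset

lemma finset_fin2_cases : ∀ s : Finset (Fin 2),
    s = ∅ ∨ s = {0} ∨ s = {1} ∨ s = {0,1} := by decide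

lemma fin2_trich (a b j : Fin 2) (h1 : b ≠ a) (h2 : b ≠ j) : a = j := by
  revert h1 h2; revert a b j; decide

theorem rtdnum_two_of_bipartite {V : Type*} [Fintype V] (G : SimpleGraph V)
    (hbip : G.Colorable 2) :
    rtdnum G 2 = 2 * domnum G := by
  classical
  obtain ⟨c⟩ := hbip
  have hfull : IsKRTDF G 2 (fun _ => (Finset.univ : Finset (Fin 2))) := by
    constructor
    · intro v hv
      exact absurd hv (by decide : (Finset.univ : Finset (Fin 2)) ≠ ∅)
    · intro v i hv
      exact absurd hv ((by decide : ∀ i : Fin 2, (Finset.univ : Finset (Fin 2)) ≠ {i}) i)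
  have hne_dom : {n | ∃ D : Finset V, (∀ v ∉ D, ∃ u ∈ D, G.Adj u v) ∧ D.card = n}.Nonempty :=
    ⟨(Finset.univ : Finset V).card, Finset.univ, fun v hv => absurd (Finset.mem_univ v) hv, rfl⟩
  have hne_rt : {n | ∃ f : V → Finset (Fin 2), IsKRTDF G 2 f ∧ ∑ v, (f v).card = n}.Nonempty :=
    ⟨_, fun _ => Finset.univ, hfull, rfl⟩
  apply le_antisymm
  · -- rtdnum ≤ 2 * domnum
    obtain ⟨D, hdom, hDcard⟩ := Nat.sInf_mem hne_dom
    have hDcard' : D.card = domnum G := hDcard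
    apply Nat.sInf_le
    refine ⟨fun v => if v ∈ D then Finset.univ else ∅, ⟨?_, ?_⟩, ?_⟩
    · intro v hv i
      by_cases hvD : v ∈ D
      · simp only [if_pos hvD] at hv; exact absurd hv (by decide)
      · obtain ⟨u, huD, hadj⟩ := hdom v hvD
        exact ⟨u, hadj.symm, by simp [huD]⟩
    · intro v i hv
      by_cases hvD : v ∈ D
      · simp only [if_pos hvD] at hv
        exact absurd hv ((by decide : ∀ i : Fin 2, (Finset.univ : Finset (Fin 2)) ≠ {i}) i)
      · simp only [if_neg hvD] at hv
        exact absurd hv.symm (Finset.singleton_ne_empty i)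
    · have h1 : ∀ v : V, ((if v ∈ D then (Finset.univ : Finset (Fin 2)) else ∅)).card
          = if v ∈ D then 2 else 0 := by
        intro v; by_cases h : v ∈ D <;> simp [h]
      calc ∑ v : V, ((if v ∈ D then (Finset.univ : Finset (Fin 2)) else ∅)).card
          = ∑ v : V, (if v ∈ D then 2 else 0) := Finset.sum_congr rfl fun v _ => h1 v
        _ = ∑ v ∈ D, 2 := by rw [Finset.sum_ite_mem, Finset.univ_inter]
        _ = 2 * domnum G := by rw [Finset.sum_const, smul_eq_mul, mul_comm, hDcard']
  · -- 2 * domnum ≤ rtdnum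
    obtain ⟨f, hf, hsum⟩ := Nat.sInf_mem hne_rt
    have hsum' : ∑ v, (f v).card = rtdnum G 2 := hsum
    set p : Fin 2 → V → Prop := fun j v =>
      ((0 : Fin 2) ∈ f v ∧ (1 : Fin 2) ∈ f v) ∨ ((0 : Fin 2) ∈ f v ∧ c v = j)
        ∨ ((1 : Fin 2) ∈ f v ∧ c v ≠ j) with hp
    have hdomj : ∀ j : Fin 2, ∀ v ∉ Finset.univ.filter (p j),
        ∃ u ∈ Finset.univ.filter (p j), G.Adj u v := by
      intro j v hv
      simp only [Finset.mem_filter, Finset.mem_univ, true_and] at hv ⊢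
      rcases finset_fin2_cases (f v) with hfv | hfv | hfv | hfv
      · rcases eq_or_ne (c v) j with hcv | hcv
        · obtain ⟨u, hadj, hu⟩ := hf.1 v hfv 1
          refine ⟨u, Or.inr (Or.inr ⟨hu, ?_⟩), hadj.symm⟩
          intro h; exact c.valid hadj (by rw [h, hcv])
        · obtain ⟨u, hadj, hu⟩ := hf.1 v hfv 0
          exact ⟨u, Or.inr (Or.inl ⟨hu, fin2_trich _ _ _ (c.valid hadj) hcv⟩), hadj.symm⟩
      · have h0 : (0 : Fin 2) ∈ f v := by rw [hfv]; decide
        have hcv : c v ≠ j := by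
          intro h; exact hv (Or.inr (Or.inl ⟨h0, h⟩))
        obtain ⟨u, hadj, hu⟩ := hf.2 v 0 hfv
        exact ⟨u, Or.inr (Or.inl ⟨hu, fin2_trich _ _ _ (c.valid hadj) hcv⟩), hadj.symm⟩
      · have h1 : (1 : Fin 2) ∈ f v := by rw [hfv]; decide
        have hcv : c v = j := by
          by_contra h; exact hv (Or.inr (Or.inr ⟨h1, h⟩))
        obtain ⟨u, hadj, hu⟩ := hf.2 v 1 hfv
        refine ⟨u, Or.inr (Or.inr ⟨hu, ?_⟩), hadj.symm⟩
        intro h; exact c.valid hadj (by rw [h, hcv])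
      · exact absurd (Or.inl ⟨by rw [hfv]; decide, by rw [hfv]; decide⟩) hv
    have hcardsum : (Finset.univ.filter (p 0)).card + (Finset.univ.filter (p 1)).card
        = ∑ v, (f v).card := by
      rw [Finset.card_filter, Finset.card_filter, ← Finset.sum_add_distrib]
      refine Finset.sum_congr rfl fun v _ => ?_
      have hc2 : c v = 0 ∨ c v = 1 := (by decide : ∀ i : Fin 2, i = 0 ∨ i = 1) (c v)
      rcases finset_fin2_cases (f v) with hfv | hfv | hfv | hfv <;>
        rcases hc2 with hc | hc <;>
        simp [hp, hfv, hc]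
    have hd0 : domnum G ≤ (Finset.univ.filter (p 0)).card := Nat.sInf_le ⟨_, hdomj 0, rfl⟩
    have hd1 : domnum G ≤ (Finset.univ.filter (p 1)).card := Nat.sInf_le ⟨_, hdomj 1, rfl⟩
    calc 2 * domnum G = domnum G + domnum G := two_mul _
      _ ≤ (Finset.univ.filter (p 0)).card + (Finset.univ.filter (p 1)).card :=
          add_le_add hd0 hd1
      _ = rtdnum G 2 := hcardsum.trans hsum'
end

section
/- For any graphs G and H without isolated vertices and any integer k ≥ 2, γ_{krt}(G) · γ_{krt}(H) ≤ 2k · γ_{krt}(G □ H). -/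
open SimpleGraph Finset

section VizingAux
open scoped Classical

variable {V : Type*} [Fintype V] {W : Type*} [Fintype W]

lemma exists_min_tds (G : SimpleGraph V) (hG : ∀ v, ∃ u, G.Adj v u) :
    ∃ D : Finset V, (∀ v, ∃ u ∈ D, G.Adj u v) ∧ D.card = totdomnum G := by
  have hne : {n | ∃ D : Finset V, (∀ v, ∃ u ∈ D, G.Adj u v) ∧ D.card = n}.Nonempty := by
    refine ⟨_, Finset.univ, fun v => ?_, rfl⟩
    obtain ⟨u, hu⟩ := hG v
    exact ⟨u, mem_univ u, hu.symm⟩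
  obtain ⟨D, h1, h2⟩ := Nat.sInf_mem hne
  exact ⟨D, h1, h2⟩

lemma totdomnum_le_card {G : SimpleGraph V} {D : Finset V}
    (hD : ∀ v, ∃ u ∈ D, G.Adj u v) : totdomnum G ≤ D.card :=
  Nat.sInf_le ⟨D, hD, rfl⟩

/-- Ho's theorem -/
lemma ho_theorem (G : SimpleGraph V) (H : SimpleGraph W)
    (hG : ∀ v, ∃ u, G.Adj v u) (hH : ∀ w, ∃ u, H.Adj w u) :
    totdomnum G * totdomnum H ≤ 2 * totdomnum (G.boxProd H) := by
  classical
  have hGH : ∀ p : V × W, ∃ q, (G.boxProd H).Adj p q := by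
    rintro ⟨v, w⟩
    obtain ⟨u, hu⟩ := hG v
    exact ⟨(u, w), Or.inl ⟨hu, rfl⟩⟩
  obtain ⟨D, hD, hDcard⟩ := exists_min_tds (G.boxProd H) hGH
  obtain ⟨T, hT, hTcard⟩ := exists_min_tds G hG
  choose ι hιT hιadj using hT
  choose nb hnb using hH
  set P : V → Finset W := fun a => (D.filter (fun p => ι p.1 = a)).image Prod.snd with hP
  set Cov : V → W → Prop := fun a w => ∃ w' ∈ P a, H.Adj w' w with hCov
  set U : V → Finset W := fun a => univ.filter (fun w => ¬ Cov a w) with hU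
  -- Claim 1
  have claim1 : ∀ a : V, totdomnum H ≤ (P a).card + (U a).card := by
    intro a
    have : totdomnum H ≤ (P a ∪ (U a).image nb).card := by
      apply totdomnum_le_card
      intro w
      by_cases hc : Cov a w
      · obtain ⟨w', hw', hadj⟩ := hc
        exact ⟨w', mem_union_left _ hw', hadj⟩
      · have hw : w ∈ U a := by simpa [hU] using hc
        refine ⟨nb w, mem_union_right (P a) ?_, (hnb w).symm⟩
        exact mem_image_of_mem nb hw
    calc totdomnum H ≤ (P a ∪ (U a).image nb).card := this
      _ ≤ (P a).card + ((U a).image nb).card := card_union_le _ _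
      _ ≤ (P a).card + (U a).card :=
        Nat.add_le_add_left (card_image_le (s := U a) (f := nb)) _
  -- Claim 2
  have claim2 : ∀ w : W, (T.filter (fun a => ¬ Cov a w)).card ≤
      (D.filter (fun p => p.2 = w)).card := by
    intro w
    set Dw : Finset V := (D.filter (fun p => p.2 = w)).image Prod.fst with hDw
    have htds : ∀ v, ∃ u ∈ Dw ∪ T.filter (fun a => Cov a w), G.Adj u v := by
      intro v
      by_cases hc : Cov (ι v) w
      · exact ⟨ι v, mem_union_right _ (mem_filter.2 ⟨hιT v, hc⟩), hιadj v⟩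
      · obtain ⟨q, hq, hadj⟩ := hD (v, w)
        rcases hadj with ⟨h1, h2⟩ | ⟨h1, h2⟩
        · refine ⟨q.1, mem_union_left _ ?_, h1⟩
          exact mem_image_of_mem _ (mem_filter.2 ⟨hq, h2⟩)
        · exact absurd ⟨q.2, mem_image_of_mem _ (mem_filter.2 ⟨hq, by rw [h2]⟩), h1⟩ hc
    have h1 : totdomnum G ≤ Dw.card + (T.filter (fun a => Cov a w)).card := by
      calc totdomnum G ≤ (Dw ∪ T.filter (fun a => Cov a w)).card := totdomnum_le_card htds
        _ ≤ _ := card_union_le _ _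
    have h2 : (T.filter (fun a => Cov a w)).card + (T.filter (fun a => ¬ Cov a w)).card
        = T.card := card_filter_add_card_filter_not _
    have h3 : Dw.card ≤ (D.filter (fun p => p.2 = w)).card := card_image_le
    omega
  -- summations
  have sum2 : ∑ a ∈ T, (U a).card ≤ D.card := by
    have swap : ∑ a ∈ T, (U a).card = ∑ w : W, (T.filter (fun a => ¬ Cov a w)).card := by
      simp only [hU, card_filter]
      exact Finset.sum_comm
    rw [swap]
    calc ∑ w : W, (T.filter (fun a => ¬ Cov a w)).card
        ≤ ∑ w : W, (D.filter (fun p => p.2 = w)).card := sum_le_sum fun w _ => claim2 w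
      _ = D.card := (card_eq_sum_card_fiberwise (fun p _ => mem_univ p.2)).symm
  have sum1 : ∑ a ∈ T, (P a).card ≤ D.card := by
    calc ∑ a ∈ T, (P a).card
        ≤ ∑ a ∈ T, (D.filter (fun p => ι p.1 = a)).card := sum_le_sum fun a _ => card_image_le
      _ = D.card := (card_eq_sum_card_fiberwise (fun p _ => hιT p.1)).symm
  calc totdomnum G * totdomnum H = ∑ _a ∈ T, totdomnum H := by
        rw [sum_const, smul_eq_mul, hTcard]
    _ ≤ ∑ a ∈ T, ((P a).card + (U a).card) := sum_le_sum fun a _ => claim1 a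
    _ = (∑ a ∈ T, (P a).card) + ∑ a ∈ T, (U a).card := sum_add_distrib
    _ ≤ D.card + D.card := add_le_add sum1 sum2
    _ = 2 * D.card := by ring
    _ = 2 * totdomnum (G.boxProd H) := by rw [hDcard]

lemma totdomnum_iso {G : SimpleGraph V} {G' : SimpleGraph W} (e : G ≃g G') :
    totdomnum G = totdomnum G' := by
  unfold totdomnum
  congr 1
  ext n
  constructor
  · rintro ⟨D, hD, rfl⟩
    refine ⟨D.map e.toEquiv.toEmbedding, fun w => ?_, by simp⟩
    obtain ⟨u, hu, hadj⟩ := hD (e.symm w)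
    refine ⟨e u, mem_map_of_mem _ hu, ?_⟩
    have := e.map_adj_iff.2 hadj
    simpa using this
  · rintro ⟨D, hD, rfl⟩
    refine ⟨D.map e.symm.toEquiv.toEmbedding, fun v => ?_, by simp⟩
    obtain ⟨u, hu, hadj⟩ := hD (e v)
    refine ⟨e.symm u, mem_map_of_mem _ hu, ?_⟩
    have := e.symm.map_adj_iff.2 hadj
    simpa using this

lemma card_fiber_sum (k : ℕ) (D : Finset (V × Fin k)) :
    D.card = ∑ v, (univ.filter (fun c => (v, c) ∈ D)).card := by
  conv_lhs => rw [← Finset.filter_univ_mem D]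
  rw [card_filter, Fintype.sum_prod_type]
  refine Finset.sum_congr rfl fun v _ => ?_
  rw [card_filter]

lemma rtdnum_eq_totdomnum_box (G : SimpleGraph V) (k : ℕ) :
    rtdnum G k = totdomnum (G.boxProd (⊤ : SimpleGraph (Fin k))) := by
  unfold rtdnum totdomnum
  congr 1
  ext n
  constructor
  · rintro ⟨f, ⟨hf1, hf2⟩, rfl⟩
    refine ⟨univ.filter (fun p : V × Fin k => p.2 ∈ f p.1), fun p => ?_, ?_⟩
    · obtain ⟨v, c⟩ := p
      by_cases hv : f v = ∅
      · obtain ⟨u, hadj, hu⟩ := hf1 v hv c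
        exact ⟨(u, c), by simpa using hu, Or.inl ⟨hadj.symm, rfl⟩⟩
      · by_cases hs : f v = {c}
        · obtain ⟨u, hadj, hu⟩ := hf2 v c hs
          exact ⟨(u, c), by simpa using hu, Or.inl ⟨hadj.symm, rfl⟩⟩
        · have : ∃ c' ∈ f v, c' ≠ c := by
            by_contra h
            push_neg at h
            apply hs
            apply Finset.eq_singleton_iff_nonempty_unique_mem.2
            refine ⟨Finset.nonempty_iff_ne_empty.2 hv, fun x hx => h x hx⟩
          obtain ⟨c', hc', hne⟩ := this
          exact ⟨(v, c'), by simpa using hc', Or.inr ⟨hne, rfl⟩⟩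
    · rw [card_fiber_sum]
      congr 1
      ext v
      congr 1
      ext c
      simp
  · rintro ⟨D, hD, rfl⟩
    refine ⟨fun v => univ.filter (fun c => (v, c) ∈ D), ⟨?_, ?_⟩, (card_fiber_sum k D).symm⟩
    · intro v hv i
      obtain ⟨⟨u, c⟩, hu, hadj⟩ := hD (v, i)
      dsimp only at hv
      rcases hadj with ⟨h1, h2⟩ | ⟨h1, h2⟩ <;> dsimp only at h1 h2
      · refine ⟨u, h1.symm, ?_⟩
        simp only [mem_filter, mem_univ, true_and]
        rwa [← h2]
      · exfalso
        have : c ∈ univ.filter (fun c => (v, c) ∈ D) := by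
          simp only [mem_filter, mem_univ, true_and]
          rwa [h2] at hu
        rw [hv] at this
        exact absurd this (notMem_empty c)
    · intro v i hv
      obtain ⟨⟨u, c⟩, hu, hadj⟩ := hD (v, i)
      dsimp only at hv
      rcases hadj with ⟨h1, h2⟩ | ⟨h1, h2⟩ <;> dsimp only at h1 h2
      · refine ⟨u, h1.symm, ?_⟩
        simp only [mem_filter, mem_univ, true_and]
        rwa [← h2]
      · exfalso
        have : c ∈ univ.filter (fun c' => (v, c') ∈ D) := by
          simp only [mem_filter, mem_univ, true_and]
          rwa [h2] at hu
        rw [hv, mem_singleton] at this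
        exact h1 this

lemma rtdnum_le_k_totdomnum (G : SimpleGraph V) (k : ℕ) (D : Finset V) (hD : ∀ v, ∃ u ∈ D, G.Adj u v) :
    rtdnum G k ≤ k * D.card := by
  have hmem : (k * D.card) ∈
      {n | ∃ f : V → Finset (Fin k), IsKRTDF G k f ∧ ∑ v, (f v).card = n} := by
    refine ⟨fun v => if v ∈ D then univ else ∅, ⟨?_, ?_⟩, ?_⟩
    · intro v _ i
      obtain ⟨u, hu, hadj⟩ := hD v
      exact ⟨u, hadj.symm, by simp [hu]⟩
    · intro v i _
      obtain ⟨u, hu, hadj⟩ := hD v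
      exact ⟨u, hadj.symm, by simp [hu]⟩
    · simp only [apply_ite Finset.card, Finset.card_univ, Fintype.card_fin, card_empty,
        Finset.sum_ite_mem, univ_inter, sum_const, smul_eq_mul, mul_comm]
  exact Nat.sInf_le hmem

end VizingAux

theorem rtdnum_vizing_like {V W : Type*} [Fintype V] [Fintype W]
    (G : SimpleGraph V) (H : SimpleGraph W) (k : ℕ) (hk : 2 ≤ k)
    (hG : ∀ v : V, ∃ u, G.Adj v u) (hH : ∀ w : W, ∃ u, H.Adj w u) :
    rtdnum G k * rtdnum H k ≤ 2 * k * rtdnum (G.boxProd H) k := by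
  classical
  have hH' : ∀ w : W × Fin k, ∃ u, (H.boxProd (⊤ : SimpleGraph (Fin k))).Adj w u := by
    rintro ⟨w, c⟩
    obtain ⟨u, hu⟩ := hH w
    exact ⟨(u, c), Or.inl ⟨hu, rfl⟩⟩
  obtain ⟨T, hT, hTcard⟩ := exists_min_tds G hG
  have h1 : rtdnum G k ≤ k * totdomnum G := by
    rw [← hTcard]
    exact rtdnum_le_k_totdomnum G k T hT
  have e1 : rtdnum H k = totdomnum (H.boxProd (⊤ : SimpleGraph (Fin k))) :=
    rtdnum_eq_totdomnum_box H k
  have e2 : rtdnum (G.boxProd H) k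
      = totdomnum ((G.boxProd H).boxProd (⊤ : SimpleGraph (Fin k))) :=
    rtdnum_eq_totdomnum_box _ k
  have e3 : totdomnum (G.boxProd (H.boxProd (⊤ : SimpleGraph (Fin k))))
      = totdomnum ((G.boxProd H).boxProd (⊤ : SimpleGraph (Fin k))) :=
    (totdomnum_iso (boxProdAssoc G H (⊤ : SimpleGraph (Fin k)))).symm
  have hho := ho_theorem G (H.boxProd (⊤ : SimpleGraph (Fin k))) hG hH'
  calc rtdnum G k * rtdnum H k
      ≤ (k * totdomnum G) * rtdnum H k := Nat.mul_le_mul_right _ h1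
    _ = k * (totdomnum G * totdomnum (H.boxProd (⊤ : SimpleGraph (Fin k)))) := by
        rw [e1]; ring
    _ ≤ k * (2 * totdomnum (G.boxProd (H.boxProd (⊤ : SimpleGraph (Fin k))))) :=
        Nat.mul_le_mul_left _ hho
    _ = 2 * k * totdomnum ((G.boxProd H).boxProd (⊤ : SimpleGraph (Fin k))) := by
        rw [e3]; ring
    _ = 2 * k * rtdnum (G.boxProd H) k := by rw [e2]
end

section
/- The 4-rainbow domination number of the Cartesian product C_4 □ C_4 equals 8. -/
open SimpleGraph Finset

instance : DecidableRel ((cycleGraph 4).boxProd (cycleGraph 4)).Adj :=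
  fun _ _ => decidable_of_iff _ (SimpleGraph.boxProd_adj).symm

/-- A weight-8 4-rainbow dominating function of `C₄ □ C₄`. -/
def rdfC4C4 : Fin 4 × Fin 4 → Finset (Fin 4) := fun p =>
  match p with
  | (0,0) => {0} | (0,2) => {1} | (1,1) => {2} | (1,3) => {3}
  | (2,0) => {1} | (2,2) => {0} | (3,1) => {3} | (3,3) => {2}
  | _ => ∅

lemma rdfC4C4_isKRDF : IsKRDF ((cycleGraph 4).boxProd (cycleGraph 4)) 4 rdfC4C4 := by
  unfold IsKRDF; decide

lemma rdnum_C4_boxProd_C4_lower (f : Fin 4 × Fin 4 → Finset (Fin 4))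
    (hf : IsKRDF ((cycleGraph 4).boxProd (cycleGraph 4)) 4 f) :
    8 ≤ ∑ v, (f v).card := by
  set G := (cycleGraph 4).boxProd (cycleGraph 4) with hG
  set W := ∑ v, (f v).card with hW
  set S := (univ : Finset (Fin 4 × Fin 4)).filter (fun v => f v = ∅) with hS
  set N : Fin 4 × Fin 4 → Finset (Fin 4 × Fin 4) :=
    fun v => (univ : Finset (Fin 4 × Fin 4)).filter (fun u => G.Adj v u) with hN
  have hdeg : ∀ u : Fin 4 × Fin 4,
      ((univ : Finset (Fin 4 × Fin 4)).filter (fun v => G.Adj v u)).card = 4 := by decide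
  -- each empty vertex sees total label weight at least 4 on its neighborhood
  have hA : ∀ v ∈ S, 4 ≤ ∑ u ∈ N v, (f u).card := by
    intro v hv
    have hsub : (univ : Finset (Fin 4)) ⊆ (N v).biUnion f := by
      intro i _
      obtain ⟨u, hu, hi⟩ := hf v ((mem_filter.1 hv).2) i
      exact mem_biUnion.2 ⟨u, mem_filter.2 ⟨mem_univ u, hu⟩, hi⟩
    calc 4 = (univ : Finset (Fin 4)).card := by simp
      _ ≤ ((N v).biUnion f).card := card_le_card hsub
      _ ≤ ∑ u ∈ N v, (f u).card := card_biUnion_le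
  -- double counting: swap the order of summation
  have hswap : ∑ v : Fin 4 × Fin 4, ∑ u ∈ N v, (f u).card = 4 * W := by
    have h1 : ∀ v : Fin 4 × Fin 4, ∑ u ∈ N v, (f u).card
        = ∑ u : Fin 4 × Fin 4, if G.Adj v u then (f u).card else 0 := by
      intro v; rw [hN, sum_filter]
    simp_rw [h1]
    rw [Finset.sum_comm, hW, mul_sum]
    refine Finset.sum_congr rfl (fun u _ => ?_)
    rw [← sum_filter, sum_const, smul_eq_mul, hdeg u]
  have hcardS : S.card ≤ W := by
    have h1 : S.card * 4 ≤ ∑ v ∈ S, ∑ u ∈ N v, (f u).card := by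
      calc S.card * 4 = ∑ _v ∈ S, 4 := by rw [sum_const, smul_eq_mul]
        _ ≤ _ := sum_le_sum hA
    have h2 : ∑ v ∈ S, ∑ u ∈ N v, (f u).card
        ≤ ∑ v : Fin 4 × Fin 4, ∑ u ∈ N v, (f u).card :=
      sum_le_sum_of_subset (subset_univ S)
    omega
  have hcardSc : 16 - S.card ≤ W := by
    have hc : S.card + ((univ : Finset (Fin 4 × Fin 4)).filter (fun v => ¬ f v = ∅)).card
        = 16 := by
      rw [hS, card_filter_add_card_filter_not]
      decide
    have hle : ((univ : Finset (Fin 4 × Fin 4)).filter (fun v => ¬ f v = ∅)).card ≤ W := by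
      calc ((univ : Finset (Fin 4 × Fin 4)).filter (fun v => ¬ f v = ∅)).card
          = ∑ _v ∈ (univ : Finset (Fin 4 × Fin 4)).filter (fun v => ¬ f v = ∅), 1 := by
            rw [sum_const, smul_eq_mul, mul_one]
        _ ≤ ∑ v ∈ (univ : Finset (Fin 4 × Fin 4)).filter (fun v => ¬ f v = ∅), (f v).card :=
            sum_le_sum (fun v hv => Finset.card_pos.2
              (Finset.nonempty_iff_ne_empty.2 (mem_filter.1 hv).2))
        _ ≤ W := sum_le_sum_of_subset (subset_univ _)
    omega
  omega

theorem rdnum_C4_boxProd_C4 :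
    rdnum ((cycleGraph 4).boxProd (cycleGraph 4)) 4 = 8 := by
  have hmem : 8 ∈ {n | ∃ f : Fin 4 × Fin 4 → Finset (Fin 4),
      IsKRDF ((cycleGraph 4).boxProd (cycleGraph 4)) 4 f ∧ ∑ v, (f v).card = n} :=
    ⟨rdfC4C4, rdfC4C4_isKRDF, by decide⟩
  refine le_antisymm (Nat.sInf_le hmem) (le_csInf ⟨8, hmem⟩ ?_)
  rintro n ⟨f, hf, rfl⟩
  exact rdnum_C4_boxProd_C4_lower f hf
end
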